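/- arXiv:2004.04326 — 9 statements merged into one kernel-verified Lean document; each statement's English description precedes it below -/
import Mathlib

section
/- Let H be a real Hilbert space, let F : H → H be monotone, let G : H → Set H be monotone, and let μ ∈ (0,1) and γ, γ' > 0. Let p ∈ H satisfy 0 ∈ Fp + Gp, let w, y ∈ H satisfy w − γFw − y ∈ γ • Gy, suppose γ'·‖Fw − Fy‖ ≤ μ·‖w − y‖, and set z = y − γ(Fy − Fw). Then ‖z − p‖² ≤ ‖w − p‖² − (1 − μ²γ²/γ'²)·‖w − y‖². (Lemma 3.1, pointwise per-iteration form.) -/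
open RealInnerProductSpace Pointwise

/-- Lemma 3.1 (pointwise per-iteration form): the fundamental estimate for one Tseng step. -/
theorem lemma31_pointwise {H : Type*} [NormedAddCommGroup H] [InnerProductSpace ℝ H]
    [CompleteSpace H]
    (F : H → H) (G : H → Set H)
    (hF : ∀ x y : H, 0 ≤ ⟪F x - F y, x - y⟫)
    (hG : ∀ x y p q : H, p ∈ G x → q ∈ G y → 0 ≤ ⟪p - q, x - y⟫)
    (μ γ γ' : ℝ) (hμ : μ ∈ Set.Ioo (0 : ℝ) 1) (hγ : 0 < γ) (hγ' : 0 < γ')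
    (p : H) (hp : -F p ∈ G p)
    (w y z : H) (hy : w - γ • F w - y ∈ γ • G y)
    (hstep : γ' * ‖F w - F y‖ ≤ μ * ‖w - y‖)
    (hz : z = y - γ • (F y - F w)) :
    ‖z - p‖ ^ 2 ≤ ‖w - p‖ ^ 2 - (1 - μ ^ 2 * γ ^ 2 / γ' ^ 2) * ‖w - y‖ ^ 2 := by
  obtain ⟨u, hu, heq⟩ := hy
  have h1 : 0 ≤ ⟪u - -F p, y - p⟫ := hG y p u (-F p) hu hp
  have h2 : 0 ≤ ⟪F y - F p, y - p⟫ := hF y p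
  have key : 0 ≤ ⟪(w - y) + γ • (F y - F w), y - p⟫ := by
    have heq' : γ • u = w - γ • F w - y := heq
    have hrepr : (w - y) + γ • (F y - F w) = γ • (u - -F p) + γ • (F y - F p) := by
      calc (w - y) + γ • (F y - F w) = (w - γ • F w - y) + γ • F p + γ • (F y - F p) := by module
        _ = γ • u + γ • F p + γ • (F y - F p) := by rw [heq']
        _ = γ • (u - -F p) + γ • (F y - F p) := by module
    rw [hrepr, inner_add_left, real_inner_smul_left, real_inner_smul_left]
    nlinarith
  rw [inner_add_left] at key
  have e1 : ‖z - p‖ ^ 2 = ‖y - p‖ ^ 2 - 2 * ⟪y - p, γ • (F y - F w)⟫ + ‖γ • (F y - F w)‖ ^ 2 := by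
    have : z - p = (y - p) - γ • (F y - F w) := by rw [hz]; abel
    rw [this, norm_sub_sq_real]; try ring
  have e2 : ‖w - p‖ ^ 2 = ‖w - y‖ ^ 2 + 2 * ⟪w - y, y - p⟫ + ‖y - p‖ ^ 2 := by
    have : w - p = (w - y) + (y - p) := by abel
    rw [this, norm_add_sq_real]; try ring
  have hb : ‖γ • (F y - F w)‖ ^ 2 = γ ^ 2 * ‖F w - F y‖ ^ 2 := by
    rw [norm_smul, norm_sub_rev, Real.norm_eq_abs, mul_pow, sq_abs]
  have hk : γ ^ 2 * ‖F w - F y‖ ^ 2 ≤ μ ^ 2 * γ ^ 2 / γ' ^ 2 * ‖w - y‖ ^ 2 := by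
    have hsq : (γ' * ‖F w - F y‖) ^ 2 ≤ (μ * ‖w - y‖) ^ 2 := by
      apply sq_le_sq' _ hstep
      nlinarith [norm_nonneg (F w - F y), hγ'.le, norm_nonneg (w - y), hμ.1.le]
    rw [div_mul_eq_mul_div, le_div_iff₀ (by positivity)]
    nlinarith [hsq, sq_nonneg γ]
  have hsym : ⟪y - p, γ • (F y - F w)⟫ = ⟪γ • (F y - F w), y - p⟫ := real_inner_comm _ _
  nlinarith [key, hk, e1, e2, hb]
end

section
/- Let H be a real Hilbert space, let F : H → H be monotone, let G : H → Set H be monotone, and let γ > 0. Let h, g, w, y ∈ H satisfy g − Fh ∈ Gh and w − γFw − y ∈ γ • Gy. Then ⟨h − y, g⟩ ≥ ⟨h − y, Fy − Fw⟩ + (1/γ)·⟨h − y, w − y⟩. (The key inequality in the proof of Lemma 3.2.) -/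
open RealInnerProductSpace Pointwise

/-- The key inequality in the proof of Lemma 3.2. -/
theorem key_ineq_lemma32 {H : Type*} [NormedAddCommGroup H] [InnerProductSpace ℝ H]
    [CompleteSpace H]
    (F : H → H) (G : H → Set H)
    (hF : ∀ x y : H, 0 ≤ ⟪F x - F y, x - y⟫)
    (hG : ∀ x y p q : H, p ∈ G x → q ∈ G y → 0 ≤ ⟪p - q, x - y⟫)
    (γ : ℝ) (hγ : 0 < γ)
    (h g w y : H) (hhg : g - F h ∈ G h) (hy : w - γ • F w - y ∈ γ • G y) :
    ⟪h - y, F y - F w⟫ + (1 / γ) * ⟪h - y, w - y⟫ ≤ ⟪h - y, g⟫ := by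
  obtain ⟨u, hu, heq⟩ := hy
  have hGmono := hG h y (g - F h) u hhg hu
  have hFmono := hF h y
  have hueq : u = (1/γ) • (w - γ • F w - y) := by
    rw [← heq]; rw [smul_smul]; rw [one_div_mul_cancel hγ.ne', one_smul]
  have h1 : ⟪g - F h - u, h - y⟫ = ⟪h - y, g⟫ - ⟪h - y, F h⟫ - ⟪h - y, u⟫ := by
    rw [inner_sub_left, inner_sub_left, real_inner_comm g, real_inner_comm (F h),
      real_inner_comm u]
  have h2 : ⟪h - y, u⟫ = (1/γ) * ⟪h - y, w - y⟫ - ⟪h - y, F w⟫ := by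
    rw [hueq, real_inner_smul_right, inner_sub_right, inner_sub_right,
      real_inner_smul_right]
    rw [inner_sub_right]
    field_simp
    ring
  have h3 : ⟪h - y, F y - F w⟫ = ⟪h - y, F y⟫ - ⟪h - y, F w⟫ := inner_sub_right _ _ _
  have h4 : ⟪F h - F y, h - y⟫ = ⟪h - y, F h⟫ - ⟪h - y, F y⟫ := by
    rw [real_inner_comm]; exact inner_sub_right _ _ _
  rw [h1] at hGmono
  rw [h4] at hFmono
  rw [h3]
  linarith
end

section
/- Let H be a real Hilbert space, let F : H → H be monotone and L-Lipschitz continuous with L > 0, and let G : H → Set H be maximal monotone. Let (x_n), (w_n), (y_n) be sequences in H and (γ_n) a sequence of positive reals converging to some γ > 0, such that w_n − γ_n F w_n − y_n ∈ γ_n • G y_n for all n, ‖w_n − x_n‖ → 0, and ‖w_n − y_n‖ → 0. If a subsequence (x_{n_k}) converges weakly to some q ∈ H, then 0 ∈ Fq + Gq. (Lemma 3.2.) -/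
open RealInnerProductSpace Pointwise Filter

private noncomputable def Qf {H : Type*} [NormedAddCommGroup H] [InnerProductSpace ℝ H]
    (a b x u : H) : ℝ :=
  ⟪x, b⟫ + ⟪a, u⟫ - ⟪a, b⟫ + ‖x‖ ^ 2 / 2 + ‖u‖ ^ 2 / 2

private lemma norm_smul_interp {H : Type*} [NormedAddCommGroup H] [InnerProductSpace ℝ H]
    (t : ℝ) (p q : H) :
    ‖(1 - t) • p + t • q‖ ^ 2
      = (1 - t) * ‖p‖ ^ 2 + t * ‖q‖ ^ 2 - t * (1 - t) * ‖p - q‖ ^ 2 := by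
  rw [norm_add_sq_real, real_inner_smul_left, real_inner_smul_right, norm_smul, norm_smul,
    mul_pow, mul_pow, Real.norm_eq_abs, Real.norm_eq_abs, sq_abs, sq_abs, norm_sub_sq_real]
  ring

private lemma Qf_interp {H : Type*} [NormedAddCommGroup H] [InnerProductSpace ℝ H]
    (t : ℝ) (a b x u x' u' : H) :
    Qf a b ((1 - t) • x + t • x') ((1 - t) • u + t • u')
      = (1 - t) * Qf a b x u + t * Qf a b x' u'
        - (t * (1 - t) / 2) * (‖x - x'‖ ^ 2 + ‖u - u'‖ ^ 2) := by
  simp only [Qf, inner_add_left, inner_add_right, real_inner_smul_left, real_inner_smul_right,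
    norm_smul_interp]
  ring

private lemma Qf_graph_le {H : Type*} [NormedAddCommGroup H] [InnerProductSpace ℝ H]
    {G : H → Set H}
    (hGmono : ∀ x y p q : H, p ∈ G x → q ∈ G y → 0 ≤ ⟪p - q, x - y⟫)
    {a b c d : H} (hab : b ∈ G a) (hcd : d ∈ G c) :
    Qf a b c d ≤ ‖c + d‖ ^ 2 / 2 := by
  have h0 := hGmono c a d b hcd hab
  simp only [inner_sub_left, inner_sub_right] at h0
  simp only [Qf]
  nlinarith [h0, norm_add_sq_real c d, real_inner_comm d c, real_inner_comm d a,
    real_inner_comm b c, real_inner_comm b a]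

/-- Minty's theorem, core case: a maximal monotone operator has a zero of `I + G`. -/
private theorem minty_core {H : Type*} [NormedAddCommGroup H] [InnerProductSpace ℝ H]
    [CompleteSpace H] (G : H → Set H)
    (hGmono : ∀ x y p q : H, p ∈ G x → q ∈ G y → 0 ≤ ⟪p - q, x - y⟫)
    (hGmax : ∀ x p : H, (∀ y q : H, q ∈ G y → 0 ≤ ⟪p - q, x - y⟫) → p ∈ G x) :
    ∃ y u : H, u ∈ G y ∧ y + u = 0 := by
  classical
  -- the graph is nonempty
  obtain ⟨a₀, b₀, hab₀⟩ : ∃ a b : H, b ∈ G a := by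
    by_cases h : ∃ a b : H, b ∈ G a
    · exact h
    · push_neg at h
      exact ⟨0, 0, hGmax 0 0 fun y q' hq' => absurd hq' (h y q')⟩
  set V : Set ℝ := {r | ∃ c d : H, ∀ a b : H, b ∈ G a → Qf a b c d ≤ r} with hV
  have hVne : V.Nonempty := ⟨‖a₀ + b₀‖ ^ 2 / 2, a₀, b₀, fun a b hab =>
    Qf_graph_le hGmono hab hab₀⟩
  -- every element of V is nonnegative
  have hVlb : ∀ r ∈ V, (0 : ℝ) ≤ r := by
    rintro r ⟨c, d, hcd⟩
    have key : ∃ a b : H, b ∈ G a ∧ ‖c + d‖ ^ 2 / 2 ≤ Qf a b c d := by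
      by_cases hd : d ∈ G c
      · refine ⟨c, d, hd, ?_⟩
        simp only [Qf]
        nlinarith [norm_add_sq_real c d]
      · have : ¬ ∀ a b : H, b ∈ G a → 0 ≤ ⟪d - b, c - a⟫ := by
          intro hcon
          exact hd (hGmax c d fun y q' hq' => hcon y q' hq')
        push_neg at this
        obtain ⟨a, b, hab, hlt⟩ := this
        refine ⟨a, b, hab, ?_⟩
        simp only [inner_sub_left, inner_sub_right] at hlt
        simp only [Qf]
        nlinarith [norm_add_sq_real c d, real_inner_comm d c, real_inner_comm d a,
          real_inner_comm b c, real_inner_comm b a]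
    obtain ⟨a, b, hab, hle⟩ := key
    have := hcd a b hab
    nlinarith [sq_nonneg ‖c + d‖]
  have hVbdd : BddBelow V := ⟨0, fun r hr => hVlb r hr⟩
  set μ := sInf V with hμ
  have hμ0 : 0 ≤ μ := le_csInf hVne hVlb
  have hμle : ∀ r ∈ V, μ ≤ r := fun r hr => csInf_le hVbdd hr
  -- almost minimizers
  have hsel : ∀ n : ℕ, ∃ c d : H, ∃ r : ℝ, r < μ + 1 / (n + 1) ∧
      ∀ a b : H, b ∈ G a → Qf a b c d ≤ r := by
    intro n
    have hpos : (0 : ℝ) < 1 / (n + 1) := by positivity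
    obtain ⟨r, hrV, hrlt⟩ := Real.lt_sInf_add_pos hVne hpos
    obtain ⟨c, d, hcd⟩ := hrV
    exact ⟨c, d, r, hrlt, hcd⟩
  choose xs us rs hlt hle using hsel
  have hrsV : ∀ n, rs n ∈ V := fun n => ⟨xs n, us n, hle n⟩
  have hμrs : ∀ n, μ ≤ rs n := fun n => hμle _ (hrsV n)
  -- Cauchy estimate
  have hcau : ∀ n m : ℕ, ‖xs n - xs m‖ ^ 2 + ‖us n - us m‖ ^ 2
      ≤ 4 * (1 / (n + 1) + 1 / (m + 1)) := by
    intro n m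
    set D := ‖xs n - xs m‖ ^ 2 + ‖us n - us m‖ ^ 2 with hD
    have hmid : ((1 : ℝ) - 1/2) * rs n + (1/2) * rs m - ((1/2) * (1 - 1/2) / 2) * D ∈ V := by
      refine ⟨(1 - (1/2 : ℝ)) • xs n + (1/2 : ℝ) • xs m,
        (1 - (1/2 : ℝ)) • us n + (1/2 : ℝ) • us m, fun a b hab => ?_⟩
      rw [Qf_interp]
      have h1 := hle n a b hab
      have h2 := hle m a b hab
      nlinarith [sq_nonneg ‖xs n - xs m‖, sq_nonneg ‖us n - us m‖]
    have := hμle _ hmid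
    have l1 := hlt n
    have l2 := hlt m
    have l3 := hμrs n
    have l4 := hμrs m
    nlinarith
  have hcauchy : ∀ (s : ℕ → H), (∀ n m : ℕ, ‖s n - s m‖ ^ 2
      ≤ 4 * (1 / (n + 1) + 1 / (m + 1))) → CauchySeq s := by
    intro s hs
    refine cauchySeq_of_le_tendsto_0 (fun N => Real.sqrt (8 * (1 / (N + 1)))) ?_ ?_
    · intro n m N hn hm
      rw [dist_eq_norm]
      have h8 : ‖s n - s m‖ ^ 2 ≤ 8 * (1 / (N + 1)) := by
        have e1 : (1 : ℝ) / (n + 1) ≤ 1 / (N + 1) := by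
          apply one_div_le_one_div_of_le (by positivity)
          exact_mod_cast by omega
        have e2 : (1 : ℝ) / (m + 1) ≤ 1 / (N + 1) := by
          apply one_div_le_one_div_of_le (by positivity)
          exact_mod_cast by omega
        nlinarith [hs n m]
      exact Real.le_sqrt_of_sq_le h8
    · have : Tendsto (fun N : ℕ => 8 * (1 / ((N : ℝ) + 1))) atTop (nhds 0) := by
        simpa using (tendsto_one_div_add_atTop_nhds_zero_nat (𝕜 := ℝ)).const_mul 8
      simpa [Real.sqrt_zero] using this.sqrt
  have hxc : CauchySeq xs := by
    refine hcauchy xs fun n m => ?_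
    nlinarith [hcau n m, sq_nonneg ‖us n - us m‖]
  have huc : CauchySeq us := by
    refine hcauchy us fun n m => ?_
    nlinarith [hcau n m, sq_nonneg ‖xs n - xs m‖]
  obtain ⟨xb, hxb⟩ := cauchySeq_tendsto_of_complete hxc
  obtain ⟨ub, hub⟩ := cauchySeq_tendsto_of_complete huc
  -- the limit is a minimizer
  have hQbar : ∀ a b : H, b ∈ G a → Qf a b xb ub ≤ μ := by
    intro a b hab
    have hQt : Tendsto (fun n => Qf a b (xs n) (us n)) atTop (nhds (Qf a b xb ub)) := by
      simp only [Qf]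
      exact ((((hxb.inner tendsto_const_nhds).add
        (tendsto_const_nhds.inner hub)).sub tendsto_const_nhds).add
        (((hxb.norm.pow 2)).div_const 2)).add ((hub.norm.pow 2).div_const 2)
    have hub' : Tendsto (fun n : ℕ => μ + 1 / ((n : ℝ) + 1)) atTop (nhds μ) := by
      simpa using tendsto_const_nhds.add (tendsto_one_div_add_atTop_nhds_zero_nat (𝕜 := ℝ))
    exact le_of_tendsto_of_tendsto' hQt hub' fun n => (hle n a b hab).trans (hlt n).le
  -- quadratic growth at graph points
  have hopt : ∀ a b : H, b ∈ G a →
      μ + (‖a - xb‖ ^ 2 + ‖b - ub‖ ^ 2) / 2 ≤ ‖a + b‖ ^ 2 / 2 := by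
    intro a b hab
    set D := ‖a - xb‖ ^ 2 + ‖b - ub‖ ^ 2 with hD
    set r := ‖a + b‖ ^ 2 / 2 with hr
    have hrV : ∀ a' b' : H, b' ∈ G a' → Qf a' b' a b ≤ r := fun a' b' hab' =>
      Qf_graph_le hGmono hab' hab
    have hstep : ∀ n : ℕ, ((1 : ℝ) - 1/(n+1)) / 2 * D ≤ r - μ := by
      intro n
      set t : ℝ := 1 / (n + 1) with ht
      have ht0 : 0 < t := by positivity
      have hvt : (1 - t) * μ + t * r - (t * (1 - t) / 2) * D ∈ V := by
        refine ⟨(1 - t) • xb + t • a, (1 - t) • ub + t • b, fun a' b' hab' => ?_⟩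
        rw [Qf_interp]
        have h1 := hQbar a' b' hab'
        have h2 := hrV a' b' hab'
        have ht1 : t ≤ 1 := by
          rw [ht]
          apply div_le_one_of_le₀
          · exact_mod_cast Nat.le_add_left 1 n
          · positivity
        have e1 : ‖xb - a‖ ^ 2 = ‖a - xb‖ ^ 2 := by rw [norm_sub_rev]
        have e2 : ‖ub - b‖ ^ 2 = ‖b - ub‖ ^ 2 := by rw [norm_sub_rev]
        rw [e1, e2, ← hD]
        nlinarith [mul_nonneg (sub_nonneg.mpr ht1) (sub_nonneg.mpr h1),
          mul_nonneg ht0.le (sub_nonneg.mpr h2)]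
      have := hμle _ hvt
      have h9 : t * ((1 - t) / 2 * D) ≤ t * (r - μ) := by nlinarith
      exact le_of_mul_le_mul_left h9 ht0
    have hlim : Tendsto (fun n : ℕ => ((1 : ℝ) - 1/(n+1)) / 2 * D) atTop
        (nhds ((1 : ℝ) / 2 * D)) := by
      have : Tendsto (fun n : ℕ => (1 : ℝ) - 1/(n+1)) atTop (nhds 1) := by
        simpa using tendsto_const_nhds.sub (tendsto_one_div_add_atTop_nhds_zero_nat (𝕜 := ℝ))
      simpa using (this.div_const 2).mul_const D
    have := le_of_tendsto hlim (Eventually.of_forall hstep)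
    simp only [hD, hr] at this ⊢
    linarith
  -- the algebraic inequality (★)
  have hstar : ∀ a b : H, b ∈ G a →
      μ + ‖xb‖ ^ 2 / 2 + ‖ub‖ ^ 2 / 2 ≤ ⟪a, b⟫ + ⟪a, xb⟫ + ⟪b, ub⟫ := by
    intro a b hab
    have h := hopt a b hab
    have e1 := norm_add_sq_real a b
    have e2 := norm_sub_sq_real a xb
    have e3 := norm_sub_sq_real b ub
    nlinarith
  -- the candidate pair is monotonically related
  have hmem : (-xb) ∈ G (-ub) := by
    apply hGmax
    intro a b hab
    have h := hstar a b hab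
    have e : (-xb) - b = -(xb + b) := by abel
    have e' : (-ub) - a = -(ub + a) := by abel
    rw [e, e', inner_neg_neg, inner_add_left, inner_add_right, inner_add_right]
    linarith [h, norm_add_sq_real xb ub, real_inner_comm xb a, real_inner_comm b a,
      sq_nonneg ‖xb + ub‖, hμ0]
  -- conclude
  have hfin := hstar (-ub) (-xb) hmem
  rw [inner_neg_neg, inner_neg_left, inner_neg_left] at hfin
  have hzero : xb + ub = 0 := by
    have : ‖xb + ub‖ ^ 2 ≤ 0 := by
      nlinarith [norm_add_sq_real xb ub, real_inner_comm ub xb, hμ0]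
    have h0 : ‖xb + ub‖ = 0 := by nlinarith [norm_nonneg (xb + ub), sq_nonneg ‖xb + ub‖]
    exact norm_eq_zero.mp h0
  exact ⟨-ub, -xb, hmem, by rw [← neg_add, add_comm ub xb, hzero, neg_zero]⟩

private theorem minty_scaled {H : Type*} [NormedAddCommGroup H] [InnerProductSpace ℝ H]
    [CompleteSpace H] (G : H → Set H)
    (hGmono : ∀ x y p q : H, p ∈ G x → q ∈ G y → 0 ≤ ⟪p - q, x - y⟫)
    (hGmax : ∀ x p : H, (∀ y q : H, q ∈ G y → 0 ≤ ⟪p - q, x - y⟫) → p ∈ G x)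
    {l : ℝ} (hl : 0 < l) (wp : H) :
    ∃ y u : H, u ∈ G y ∧ y + l • u = wp := by
  set G' : H → Set H := fun x => {v | l⁻¹ • (v + wp) ∈ G x} with hG'
  have mono' : ∀ x y p q : H, p ∈ G' x → q ∈ G' y → 0 ≤ ⟪p - q, x - y⟫ := by
    intro x y p q hp hq
    have h0 := hGmono x y _ _ hp hq
    have e : l⁻¹ • (p + wp) - l⁻¹ • (q + wp) = l⁻¹ • (p - q) := by
      rw [← smul_sub]; congr 1; abel
    rw [e, real_inner_smul_left] at h0
    nlinarith [inv_pos.mpr hl]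
  have max' : ∀ x p : H, (∀ y q : H, q ∈ G' y → 0 ≤ ⟪p - q, x - y⟫) → p ∈ G' x := by
    intro x p hp
    show l⁻¹ • (p + wp) ∈ G x
    apply hGmax
    intro y u hu
    have hq' : (l • u - wp) ∈ G' y := by
      show l⁻¹ • (l • u - wp + wp) ∈ G y
      have e : l • u - wp + wp = l • u := by abel
      rw [e, smul_smul, inv_mul_cancel₀ hl.ne', one_smul]
      exact hu
    have h0 := hp y _ hq'
    have e : l • (l⁻¹ • (p + wp) - u) = p - (l • u - wp) := by
      rw [smul_sub, smul_smul, mul_inv_cancel₀ hl.ne', one_smul]; abel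
    rw [← e, real_inner_smul_left] at h0
    nlinarith
  obtain ⟨y, v, hv, hyv⟩ := minty_core G' mono' max'
  refine ⟨y, l⁻¹ • (v + wp), hv, ?_⟩
  rw [smul_smul, mul_inv_cancel₀ hl.ne', one_smul, ← add_assoc, hyv, zero_add]

/-- Lemma 3.2: any weak sequential cluster point of the iterates is a zero of `F + G`. -/
theorem lemma32 {H : Type*} [NormedAddCommGroup H] [InnerProductSpace ℝ H]
    [CompleteSpace H]
    (F : H → H) (G : H → Set H) (L : ℝ) (hL : 0 < L)
    (hFmono : ∀ x y : H, 0 ≤ ⟪F x - F y, x - y⟫)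
    (hFlip : ∀ x y : H, ‖F x - F y‖ ≤ L * ‖x - y‖)
    (hGmono : ∀ x y p q : H, p ∈ G x → q ∈ G y → 0 ≤ ⟪p - q, x - y⟫)
    (hGmax : ∀ x p : H, (∀ y q : H, q ∈ G y → 0 ≤ ⟪p - q, x - y⟫) → p ∈ G x)
    (x w y : ℕ → H) (γ : ℕ → ℝ) (hγpos : ∀ n, 0 < γ n)
    (γlim : ℝ) (hγlim : 0 < γlim) (hγ : Tendsto γ atTop (nhds γlim))
    (hres : ∀ n, w n - γ n • F (w n) - y n ∈ γ n • G (y n))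
    (hwx : Tendsto (fun n => ‖w n - x n‖) atTop (nhds 0))
    (hwy : Tendsto (fun n => ‖w n - y n‖) atTop (nhds 0))
    (q : H) (φ : ℕ → ℕ) (hφ : StrictMono φ)
    (hweak : ∀ v : H, Tendsto (fun k => ⟪x (φ k), v⟫) atTop (nhds ⟪q, v⟫)) :
    -F q ∈ G q := by
  -- the resolvent elements of the graph of G
  have hu : ∀ n, (γ n)⁻¹ • (w n - γ n • F (w n) - y n) ∈ G (y n) := by
    intro n
    obtain ⟨g, hg, heq⟩ := Set.mem_smul_set.mp (hres n)
    rw [← heq, smul_smul, inv_mul_cancel₀ (hγpos n).ne', one_smul]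
    exact hg
  -- uniform norm bound on the weakly convergent subsequence (Banach–Steinhaus)
  obtain ⟨C, hC⟩ : ∃ C : ℝ, ∀ k, ‖x (φ k)‖ ≤ C := by
    have hpt : ∀ v : H, ∃ C : ℝ, ∀ k, ‖(innerSL ℝ (x (φ k))) v‖ ≤ C := by
      intro v
      obtain ⟨C, hC⟩ := ((hweak v).norm).bddAbove_range
      exact ⟨C, fun k => by simpa [innerSL_apply_apply] using hC (Set.mem_range_self k)⟩
    obtain ⟨C, hC⟩ := banach_steinhaus hpt
    exact ⟨C, fun k => by simpa [innerSL_apply_norm] using hC k⟩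
  obtain ⟨B1, hB1⟩ := hwx.bddAbove_range
  obtain ⟨B2, hB2⟩ := hwy.bddAbove_range
  -- the key limiting inequality at every point of the graph of G
  have key1 : ∀ z p : H, p ∈ G z → ⟪F z + p, q - z⟫ ≤ 0 := by
    intro z p hp
    set M := B2 + B1 + (C + ‖z‖) with hM
    have hyz : ∀ k, ‖y (φ k) - z‖ ≤ M := by
      intro k
      have e : y (φ k) - z = (y (φ k) - w (φ k)) + (w (φ k) - x (φ k)) + (x (φ k) - z) := by
        abel
      have t1 : ‖y (φ k) - w (φ k)‖ ≤ B2 := by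
        rw [norm_sub_rev]; exact hB2 (Set.mem_range_self (φ k))
      have t2 : ‖w (φ k) - x (φ k)‖ ≤ B1 := hB1 (Set.mem_range_self (φ k))
      have t3 : ‖x (φ k) - z‖ ≤ C + ‖z‖ :=
        (norm_sub_le _ _).trans (add_le_add_left (hC k) _)
      calc ‖y (φ k) - z‖
          ≤ ‖y (φ k) - w (φ k)‖ + ‖w (φ k) - x (φ k)‖ + ‖x (φ k) - z‖ := by
            rw [e]; exact norm_add₃_le
        _ ≤ M := by rw [hM]; linarith
    -- pointwise inequality coming from monotonicity of G and F
    have hineq : ∀ n, γ n * ⟪F z + p, y n - z⟫ ≤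
        ‖w n - y n‖ * ‖y n - z‖ + γ n * (L * (‖w n - y n‖ * ‖y n - z‖)) := by
      intro n
      have h0 := hGmono (y n) z _ p (hu n) hp
      have e : (w n - y n) - γ n • (F (w n) + p)
          = γ n • ((γ n)⁻¹ • (w n - γ n • F (w n) - y n) - p) := by
        rw [smul_sub, smul_smul, mul_inv_cancel₀ (hγpos n).ne', one_smul, smul_add]; abel
      have h1 : 0 ≤ ⟪(w n - y n) - γ n • (F (w n) + p), y n - z⟫ := by
        rw [e, real_inner_smul_left]
        exact mul_nonneg (hγpos n).le h0
      rw [inner_sub_left, real_inner_smul_left] at h1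
      have feq : ⟪F (w n) + p, y n - z⟫ = ⟪F (w n) - F (y n), y n - z⟫
          + ⟪F (y n) - F z, y n - z⟫ + ⟪F z + p, y n - z⟫ := by
        rw [← inner_add_left, ← inner_add_left]
        congr 1
        abel
      have h3 := hFmono (y n) z
      have h4 : -(L * (‖w n - y n‖ * ‖y n - z‖)) ≤ ⟪F (w n) - F (y n), y n - z⟫ := by
        have habs := (abs_le.mp (abs_real_inner_le_norm (F (w n) - F (y n)) (y n - z))).1
        have hlip := hFlip (w n) (y n)
        nlinarith [norm_nonneg (y n - z), norm_nonneg (F (w n) - F (y n)),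
          norm_nonneg (w n - y n)]
      have hcs := real_inner_le_norm (w n - y n) (y n - z)
      have feq' : γ n * ⟪F (w n) + p, y n - z⟫ = γ n * ⟪F (w n) - F (y n), y n - z⟫
          + γ n * ⟪F (y n) - F z, y n - z⟫ + γ n * ⟪F z + p, y n - z⟫ := by
        rw [feq]; ring
      nlinarith [mul_nonneg (hγpos n).le h3,
        mul_le_mul_of_nonneg_left h4 (hγpos n).le, h1, hcs, feq']
    -- pass to the limit along the subsequence
    set v := F z + p with hv
    have hφt := hφ.tendsto_atTop
    have hγφ : Tendsto (fun k => γ (φ k)) atTop (nhds γlim) := hγ.comp hφt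
    have hwyφ : Tendsto (fun k => ‖w (φ k) - y (φ k)‖) atTop (nhds 0) := hwy.comp hφt
    have hwxφ : Tendsto (fun k => ‖w (φ k) - x (φ k)‖) atTop (nhds 0) := hwx.comp hφt
    have hsmall : Tendsto (fun k => ⟪v, y (φ k) - x (φ k)⟫) atTop (nhds 0) := by
      apply squeeze_zero_norm
        (a := fun k => ‖v‖ * (‖w (φ k) - y (φ k)‖ + ‖w (φ k) - x (φ k)‖))
      · intro k
        have e : y (φ k) - x (φ k) = -(w (φ k) - y (φ k)) + (w (φ k) - x (φ k)) := by abel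
        have hb : ‖y (φ k) - x (φ k)‖ ≤ ‖w (φ k) - y (φ k)‖ + ‖w (φ k) - x (φ k)‖ := by
          rw [e]
          refine (norm_add_le _ _).trans ?_
          rw [norm_neg]
        calc ‖⟪v, y (φ k) - x (φ k)⟫‖ ≤ ‖v‖ * ‖y (φ k) - x (φ k)‖ := by
              rw [Real.norm_eq_abs]; exact abs_real_inner_le_norm _ _
          _ ≤ ‖v‖ * (‖w (φ k) - y (φ k)‖ + ‖w (φ k) - x (φ k)‖) :=
              mul_le_mul_of_nonneg_left hb (norm_nonneg v)
      · simpa using (hwyφ.add hwxφ).const_mul ‖v‖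
    have hinner : Tendsto (fun k => ⟪v, y (φ k) - z⟫) atTop (nhds ⟪v, q - z⟫) := by
      have e : ∀ k, ⟪v, y (φ k) - z⟫ = ⟪x (φ k), v⟫ + ⟪v, y (φ k) - x (φ k)⟫ - ⟪v, z⟫ := by
        intro k
        have e2 : y (φ k) - z = x (φ k) + (y (φ k) - x (φ k)) - z := by abel
        rw [e2, inner_sub_right, inner_add_right, real_inner_comm v (x (φ k))]
      have e3 : ⟪v, q - z⟫ = ⟪q, v⟫ + 0 - ⟪v, z⟫ := by
        rw [inner_sub_right, real_inner_comm v q]; ring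
      simp only [e]
      rw [e3]
      exact ((hweak v).add hsmall).sub tendsto_const_nhds
    have hA : Tendsto (fun k => γ (φ k) * ⟪v, y (φ k) - z⟫) atTop
        (nhds (γlim * ⟪v, q - z⟫)) := hγφ.mul hinner
    have hB : Tendsto (fun k => ‖w (φ k) - y (φ k)‖ * M
        + γ (φ k) * (L * (‖w (φ k) - y (φ k)‖ * M))) atTop (nhds 0) := by
      have t1 : Tendsto (fun k => ‖w (φ k) - y (φ k)‖ * M) atTop (nhds 0) := by
        simpa using hwyφ.mul_const M
      have t2 : Tendsto (fun k => γ (φ k) * (L * (‖w (φ k) - y (φ k)‖ * M))) atTop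
          (nhds (γlim * (L * 0))) := hγφ.mul (t1.const_mul L)
      simpa using t1.add t2
    have hle2 : ∀ k, γ (φ k) * ⟪v, y (φ k) - z⟫ ≤ ‖w (φ k) - y (φ k)‖ * M
        + γ (φ k) * (L * (‖w (φ k) - y (φ k)‖ * M)) := by
      intro k
      refine (hineq (φ k)).trans ?_
      have h1 : ‖w (φ k) - y (φ k)‖ * ‖y (φ k) - z‖ ≤ ‖w (φ k) - y (φ k)‖ * M :=
        mul_le_mul_of_nonneg_left (hyz k) (norm_nonneg _)
      nlinarith [hL.le, (hγpos (φ k)).le,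
        mul_nonneg (mul_nonneg (hγpos (φ k)).le hL.le) (sub_nonneg.mpr h1)]
    have hfin := le_of_tendsto_of_tendsto' hA hB hle2
    by_contra hcon
    push_neg at hcon
    nlinarith [mul_pos hγlim hcon]
  -- resolvent step with a small parameter
  have h2L : (0 : ℝ) < 2 * L := by linarith
  set l : ℝ := (2 * L)⁻¹ with hldef
  have hl : 0 < l := inv_pos.mpr h2L
  obtain ⟨yb, ub, hub, hsum⟩ := minty_scaled G hGmono hGmax hl (q - l • F q)
  have h5 : l • (ub + F q) = q - yb := by
    rw [smul_add, eq_sub_iff_add_eq]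
    calc l • ub + l • F q + yb = yb + l • ub + l • F q := by abel
      _ = q - l • F q + l • F q := by rw [hsum]
      _ = q := by abel
  have hzq : yb = q := by
    have hkey := key1 yb ub hub
    have hsplit : ⟪F yb + ub, q - yb⟫ = ⟪F yb - F q, q - yb⟫ + ⟪F q + ub, q - yb⟫ := by
      rw [← inner_add_left]
      congr 1
      abel
    have hinner2 : ⟪F q + ub, q - yb⟫ = l⁻¹ * ‖q - yb‖ ^ 2 := by
      have e : F q + ub = l⁻¹ • (l • (ub + F q)) := by
        rw [smul_smul, inv_mul_cancel₀ hl.ne', one_smul]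
        abel
      rw [e, h5, real_inner_smul_left, real_inner_self_eq_norm_sq]
    have hcs2 : ⟪F q - F yb, q - yb⟫ ≤ L * ‖q - yb‖ ^ 2 := by
      have h := real_inner_le_norm (F q - F yb) (q - yb)
      have h2 := hFlip q yb
      nlinarith [norm_nonneg (q - yb), norm_nonneg (F q - F yb)]
    have hneg : ⟪F yb - F q, q - yb⟫ = -⟪F q - F yb, q - yb⟫ := by
      rw [← inner_neg_left]
      congr 1
      abel
    have hl2 : l⁻¹ = 2 * L := by rw [hldef, inv_inv]
    have hsq : ‖q - yb‖ ^ 2 ≤ 0 := by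
      nlinarith [hkey, hsplit, hinner2, hcs2, hneg, hl2, hL, sq_nonneg ‖q - yb‖]
    have h0 : q - yb = 0 := by
      have hn : ‖q - yb‖ = 0 := by nlinarith [norm_nonneg (q - yb)]
      exact norm_eq_zero.mp hn
    exact (sub_eq_zero.mp h0).symm
  have hub2 : ub = -F q := by
    have hz0 : l • (ub + F q) = 0 := by rw [h5, hzq, sub_self]
    rcases smul_eq_zero.mp hz0 with h | h
    · exact absurd h hl.ne'
    · exact eq_neg_of_add_eq_zero_left h
  rw [← hub2, ← hzq]
  exact hub
end

section
/- (Theorem 3.1: strong convergence of the Inertial Hybrid Projection Algorithm.) Let H be a real Hilbert space, let F : H → H be monotone and L-Lipschitz continuous with L > 0, let G : H → Set H be maximal monotone, and assume Ω := {x ∈ H : 0 ∈ Fx + Gx} is nonempty. Fix μ ∈ (0,1), γ₀ > 0, a sequence (α_n) in [0,1), and x_{−1} = x₀ ∈ H. Suppose sequences (x_n)_{n≥0}, (w_n), (y_n), (z_n) in H and positive reals (γ_n) satisfy, for all n ≥ 0: w_n = x_n + α_n(x_n − x_{n−1}); w_n − γ_n F w_n − y_n ∈ γ_n • G y_n; z_n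 = y_n − γ_n(F y_n − F w_n); γ_{n+1} = min{ μ‖w_n − y_n‖/‖Fw_n − Fy_n‖ , γ_n } if Fw_n ≠ Fy_n and γ_{n+1} = γ_n otherwise; C_n = {u ∈ H : ‖z_n − u‖² ≤ ‖w_n − u‖² − (1 − μ²γ_n²/γ_{n+1}²)‖w_n − y_n‖²}; Q_n = {u ∈ H : ⟨x_n − u, x_n − x₀⟩ ≤ 0}; and x_{n+1} is the metric projection of x₀ onto C_n ∩ Q_n. Then (x_n) converges strongly (in norm) to the metric projection q* of x₀ onto Ω. -/
open RealInnerProductSpace Pointwise Filter Classical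

private lemma clusterPt_le_of_eventually_le {s b' : ℕ → ℝ} {c b : ℝ}
    (hc : MapClusterPt c atTop s) (hb : Tendsto b' atTop (nhds b))
    (h : ∀ᶠ n in atTop, s n ≤ b' n) : c ≤ b := by
  by_contra hlt
  push_neg at hlt
  set ε := (c - b) / 2 with hε_def
  have hε : 0 < ε := by simp only [hε_def]; linarith
  have h1 : ∀ᶠ n in atTop, b' n < b + ε := hb.eventually_lt_const (by linarith)
  have h2 : ∀ᶠ n in atTop, s n < b + ε := by
    filter_upwards [h, h1] with n hn hn'; linarith
  have hne : NeBot (nhds c ⊓ map s atTop) := hc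
  have hmem : (Set.Ioi (b + ε) ∩ Set.Iio (b + ε)) ∈ (nhds c ⊓ map s atTop) :=
    inter_mem (mem_inf_of_left (Ioi_mem_nhds (by simp only [hε_def]; linarith)))
      (mem_inf_of_right (mem_map.2 h2))
  have hempty : (Set.Ioi (b + ε) ∩ Set.Iio (b + ε)) = ∅ := by
    ext t; simp only [Set.mem_inter_iff, Set.mem_Ioi, Set.mem_Iio, Set.mem_empty_iff_false,
      iff_false, not_and]
    intro h'; linarith
  rw [hempty] at hmem
  exact hne.ne (empty_mem_iff_bot.mp hmem)

private lemma exists_weak_cluster {H : Type*} [NormedAddCommGroup H] [InnerProductSpace ℝ H]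
    [CompleteSpace H] (x : ℕ → H) (R : ℝ) (hR : ∀ n, ‖x n‖ ≤ R) :
    ∃ u : H, ∀ v : H, MapClusterPt (⟪u, v⟫) atTop (fun n => ⟪x n, v⟫) := by
  classical
  let D := InnerProductSpace.toDual ℝ H
  let s : ℕ → WeakDual ℝ H := fun n => StrongDual.toWeakDual (D (x n))
  have hmem : ∀ n, s n ∈ (WeakDual.toStrongDual ⁻¹' Metric.closedBall 0 R) := by
    intro n
    simp only [Set.mem_preimage, Metric.mem_closedBall, dist_zero_right, s]
    have : ‖WeakDual.toStrongDual (StrongDual.toWeakDual (D (x n)))‖ = ‖x n‖ := by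
      have : WeakDual.toStrongDual (StrongDual.toWeakDual (D (x n))) = D (x n) := rfl
      rw [this]; exact (D.norm_map (x n))
    rw [this]; exact hR n
  have hcomp := WeakDual.isCompact_closedBall (𝕜 := ℝ) (E := H) 0 R
  obtain ⟨f, hfK, hf⟩ := hcomp.exists_clusterPt (f := map s atTop)
      (le_principal_iff.2 (mem_map.2 (Filter.Eventually.of_forall hmem)))
  refine ⟨D.symm (WeakDual.toStrongDual f), fun v => ?_⟩
  have hev : ContinuousAt (fun φ : WeakDual ℝ H => φ v) f :=
    (WeakDual.eval_continuous v).continuousAt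
  have hcl : ClusterPt (f v) (map (fun φ : WeakDual ℝ H => φ v) (map s atTop)) :=
    hf.map hev tendsto_map
  have heq : map (fun φ : WeakDual ℝ H => φ v) (map s atTop)
      = map (fun n => ⟪x n, v⟫) atTop := by
    rw [map_map]
    rfl
  rw [heq] at hcl
  have hfv : (⟪D.symm (WeakDual.toStrongDual f), v⟫ : ℝ) = f v :=
    InnerProductSpace.toDual_symm_apply
  rw [hfv]
  exact hcl

private lemma proj_char {H : Type*} [NormedAddCommGroup H] [InnerProductSpace ℝ H]
    {K : Set H} (hK : Convex ℝ K) {x0 p : H} (hp : p ∈ K)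
    (hmin : ∀ v ∈ K, ‖x0 - p‖ ≤ ‖x0 - v‖) {u : H} (hu : u ∈ K) :
    ⟪p - u, p - x0⟫ ≤ 0 := by
  have key : ∀ t : ℝ, 0 < t → t ≤ 1 → 2 * ⟪x0 - p, u - p⟫ ≤ t * ‖u - p‖ ^ 2 := by
    intro t ht0 ht1
    have hmem : p + t • (u - p) ∈ K := by
      have h := hK hp hu (by linarith : (0:ℝ) ≤ 1 - t) ht0.le (by ring)
      have : (1 - t) • p + t • u = p + t • (u - p) := by
        rw [smul_sub, sub_smul, one_smul]; abel
      rwa [this] at h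
    have h2 := hmin _ hmem
    have h3 : ‖x0 - p‖ ^ 2 ≤ ‖x0 - (p + t • (u - p))‖ ^ 2 :=
      pow_le_pow_left₀ (norm_nonneg _) h2 2
    have h4 : ‖x0 - (p + t • (u - p))‖ ^ 2
        = ‖x0 - p‖ ^ 2 - 2 * t * ⟪x0 - p, u - p⟫ + t ^ 2 * ‖u - p‖ ^ 2 := by
      have he : x0 - (p + t • (u - p)) = (x0 - p) - t • (u - p) := by abel
      rw [he, norm_sub_sq_real, real_inner_smul_right, norm_smul]
      simp [abs_of_pos ht0]
      ring
    rw [h4] at h3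
    nlinarith
  have hlim : Tendsto (fun n : ℕ => (1 / (n + 1 : ℝ)) * ‖u - p‖ ^ 2) atTop (nhds 0) := by
    have := tendsto_one_div_add_atTop_nhds_zero_nat (𝕜 := ℝ)
    simpa using this.mul_const (‖u - p‖ ^ 2)
  have h5 : 2 * ⟪x0 - p, u - p⟫ ≤ 0 := by
    refine ge_of_tendsto' hlim fun n => ?_
    refine key _ (by positivity) ?_
    rw [div_le_one (by positivity)]
    have h7 : (0:ℝ) ≤ (n:ℝ) := Nat.cast_nonneg n
    linarith
  have h6 : ⟪p - u, p - x0⟫ = ⟪x0 - p, u - p⟫ := by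
    rw [show p - u = -(u - p) by abel, show p - x0 = -(x0 - p) by abel,
      inner_neg_neg, real_inner_comm]
  linarith

private lemma normid {H : Type*} [NormedAddCommGroup H] [InnerProductSpace ℝ H] (A B E : H) :
    ‖A - B - E‖ ^ 2 = ‖A‖ ^ 2 - ‖B‖ ^ 2 - 2 * ⟪B + E, A - B⟫ + ‖E‖ ^ 2 := by
  simp only [← real_inner_self_eq_norm_sq, inner_sub_left, inner_sub_right, inner_add_left,
    inner_add_right]
  linarith [real_inner_comm A B, real_inner_comm A E, real_inner_comm B E]

private lemma tendsto_norm_of_sq {f : ℕ → ℝ} (h : Tendsto (fun n => f n ^ 2) atTop (nhds 0))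
    (hf : ∀ n, 0 ≤ f n) : Tendsto f atTop (nhds 0) := by
  have h2 := (Real.continuous_sqrt.tendsto' 0 0 Real.sqrt_zero).comp h
  have h3 : (fun n => Real.sqrt (f n ^ 2)) = f := funext fun n => Real.sqrt_sq (hf n)
  rwa [show (Real.sqrt ∘ fun n => f n ^ 2) = fun n => Real.sqrt (f n ^ 2) from rfl, h3] at h2
set_option maxHeartbeats 1000000 in
/-- Theorem 3.1: strong convergence of the Inertial Hybrid Projection Algorithm. -/
theorem thm31_IHPA {H : Type*} [NormedAddCommGroup H] [InnerProductSpace ℝ H]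
    [CompleteSpace H]
    (F : H → H) (G : H → Set H) (L : ℝ) (hL : 0 < L)
    (hFmono : ∀ x y : H, 0 ≤ ⟪F x - F y, x - y⟫)
    (hFlip : ∀ x y : H, ‖F x - F y‖ ≤ L * ‖x - y‖)
    (hGmono : ∀ x y p q : H, p ∈ G x → q ∈ G y → 0 ≤ ⟪p - q, x - y⟫)
    (hGmax : ∀ x p : H, (∀ y q : H, q ∈ G y → 0 ≤ ⟪p - q, x - y⟫) → p ∈ G x)
    (Ω : Set H) (hΩ : Ω = {x : H | -F x ∈ G x}) (hΩne : Ω.Nonempty)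
    (μ : ℝ) (hμ : μ ∈ Set.Ioo (0 : ℝ) 1)
    (α : ℕ → ℝ) (hα : ∀ n, α n ∈ Set.Ico (0 : ℝ) 1)
    (x w y z : ℕ → H) (γ : ℕ → ℝ) (hγpos : ∀ n, 0 < γ n)
    (C Q : ℕ → Set H)
    (hw0 : w 0 = x 0)
    (hw : ∀ n, w (n + 1) = x (n + 1) + α (n + 1) • (x (n + 1) - x n))
    (hres : ∀ n, w n - γ n • F (w n) - y n ∈ γ n • G (y n))
    (hz : ∀ n, z n = y n - γ n • (F (y n) - F (w n)))
    (hγrec : ∀ n, γ (n + 1) =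
      if F (w n) ≠ F (y n)
      then min (μ * ‖w n - y n‖ / ‖F (w n) - F (y n)‖) (γ n)
      else γ n)
    (hC : ∀ n, C n = {u : H | ‖z n - u‖ ^ 2 ≤
      ‖w n - u‖ ^ 2 - (1 - μ ^ 2 * γ n ^ 2 / γ (n + 1) ^ 2) * ‖w n - y n‖ ^ 2})
    (hQ : ∀ n, Q n = {u : H | ⟪x n - u, x n - x 0⟫ ≤ 0})
    (hproj : ∀ n, x (n + 1) ∈ C n ∩ Q n ∧
      ∀ v ∈ C n ∩ Q n, ‖x 0 - x (n + 1)‖ ≤ ‖x 0 - v‖) :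
    ∃ q : H, (q ∈ Ω ∧ ∀ v ∈ Ω, ‖x 0 - q‖ ≤ ‖x 0 - v‖) ∧
      Tendsto x atTop (nhds q) := by
  obtain ⟨hμ0, hμ1⟩ := hμ
  -- resolvent elements
  have hres' : ∀ n, ∃ g ∈ G (y n), γ n • g = w n - γ n • F (w n) - y n := by
    intro n
    obtain ⟨g, hg1, hg2⟩ := Set.mem_smul_set.mp (hres n)
    exact ⟨g, hg1, hg2⟩
  choose g hgmem hgeq using hres'
  have hγne : ∀ n, (γ n) ≠ 0 := fun n => (hγpos n).ne'
  have hkeyid : ∀ n, γ n • (g n + F (y n)) = (w n - y n) + γ n • (F (y n) - F (w n)) := by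
    intro n
    rw [smul_add, hgeq n, smul_sub]
    abel
  -- γ properties
  set m0 : ℝ := min (γ 0) (μ / L) with hm0def
  have hm0pos : 0 < m0 := lt_min (hγpos 0) (div_pos hμ0 hL)
  have hγdec : ∀ n, γ (n + 1) ≤ γ n := by
    intro n; rw [hγrec n]
    split
    · exact min_le_right _ _
    · exact le_rfl
  have hγlb : ∀ n, m0 ≤ γ n := by
    intro n; induction n with
    | zero => exact min_le_left _ _
    | succ n ih =>
      rw [hγrec n]
      split
      · rename_i hne
        refine le_min ?_ ih
        have hnorm : 0 < ‖F (w n) - F (y n)‖ := by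
          rw [norm_pos_iff, sub_ne_zero]; exact hne
        have h1 : ‖F (w n) - F (y n)‖ ≤ L * ‖w n - y n‖ := hFlip _ _
        refine (min_le_right _ _).trans ?_
        rw [div_le_div_iff₀ hL hnorm]
        calc μ * ‖F (w n) - F (y n)‖ ≤ μ * (L * ‖w n - y n‖) :=
              mul_le_mul_of_nonneg_left h1 hμ0.le
          _ = μ * ‖w n - y n‖ * L := by ring
      · exact ih
  have hkey : ∀ n, γ (n + 1) * ‖F (w n) - F (y n)‖ ≤ μ * ‖w n - y n‖ := by
    intro n
    by_cases hne : F (w n) ≠ F (y n)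
    · have h1 : γ (n + 1) ≤ μ * ‖w n - y n‖ / ‖F (w n) - F (y n)‖ := by
        rw [hγrec n, if_pos hne]; exact min_le_left _ _
      have hnorm : 0 < ‖F (w n) - F (y n)‖ := by
        rw [norm_pos_iff, sub_ne_zero]; exact hne
      calc γ (n+1) * ‖F (w n) - F (y n)‖
          ≤ (μ * ‖w n - y n‖ / ‖F (w n) - F (y n)‖) * ‖F (w n) - F (y n)‖ :=
            mul_le_mul_of_nonneg_right h1 hnorm.le
        _ = μ * ‖w n - y n‖ := by field_simp
    · push_neg at hne
      rw [hne, sub_self, norm_zero, mul_zero]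
      positivity
  -- the Minty set
  set M : Set H := {u : H | ∀ v q : H, q ∈ G v → 0 ≤ ⟪F v + q, v - u⟫} with hMdef
  have hMiff : ∀ u : H, u ∈ M ↔ ∀ v q : H, q ∈ G v → 0 ≤ ⟪F v + q, v - u⟫ := fun u => Iff.rfl
  have hΩM : Ω ⊆ M := by
    intro v0 hv0
    rw [hΩ] at hv0
    rw [hMiff]
    intro v q hq
    have h1 := hGmono v v0 q (-F v0) hq hv0
    have h2 := hFmono v v0
    have h3 : F v + q = (F v - F v0) + (q - -F v0) := by abel
    rw [h3, inner_add_left]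
    linarith
  -- M ⊆ C n
  have hMC : ∀ n, M ⊆ C n := by
    intro n v hv
    rw [hC n]
    simp only [Set.mem_setOf_eq]
    have hMv : 0 ≤ ⟪F (y n) + g n, y n - v⟫ := (hMiff v).1 hv (y n) (g n) (hgmem n)
    set A := w n - v with hAdef
    set B := w n - y n with hBdef
    set E := γ n • (F (y n) - F (w n)) with hEdef
    have hz' : z n - v = A - B - E := by rw [hz n, hAdef, hBdef, hEdef]; abel
    have hid := normid A B E
    have hBE : B + E = γ n • (g n + F (y n)) := (hkeyid n).symm
    have hAB : A - B = y n - v := by rw [hAdef, hBdef]; abel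
    have hinner : ⟪B + E, A - B⟫ = γ n * ⟪F (y n) + g n, y n - v⟫ := by
      rw [hBE, hAB, real_inner_smul_left, add_comm (g n)]
    have hE2 : ‖E‖ ^ 2 = γ n ^ 2 * ‖F (w n) - F (y n)‖ ^ 2 := by
      rw [hEdef, norm_smul, norm_sub_rev (F (y n)), Real.norm_eq_abs, abs_of_pos (hγpos n),
        mul_pow]
    have hFsq : (γ (n+1)) ^ 2 * ‖F (w n) - F (y n)‖ ^ 2 ≤ μ ^ 2 * ‖B‖ ^ 2 := by
      have h := hkey n
      nlinarith [mul_nonneg (hγpos (n+1)).le (norm_nonneg (F (w n) - F (y n))),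
        mul_nonneg hμ0.le (norm_nonneg (w n - y n))]
    have hγ1 : (0:ℝ) < γ (n+1) ^ 2 := pow_pos (hγpos (n+1)) 2
    have hE2' : ‖E‖ ^ 2 ≤ μ ^ 2 * γ n ^ 2 / γ (n+1) ^ 2 * ‖B‖ ^ 2 := by
      rw [hE2, div_mul_eq_mul_div, le_div_iff₀ hγ1]
      nlinarith [hFsq, sq_nonneg (γ n)]
    have hγn0 : 0 ≤ γ n * ⟪F (y n) + g n, y n - v⟫ := mul_nonneg (hγpos n).le hMv
    rw [hz', hid, hinner]
    nlinarith [hE2']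
  -- membership in Q
  have hQmem : ∀ n (u : H), u ∈ Q n ↔ ⟪x n - u, x n - x 0⟫ ≤ 0 := by
    intro n u; rw [hQ n]; exact Iff.rfl
  -- convexity
  have hCconv : ∀ n, Convex ℝ (C n) := by
    intro n
    have hset : C n = {u : H | 2 * ⟪w n - z n, u⟫ ≤
        ‖w n‖ ^ 2 - ‖z n‖ ^ 2 - (1 - μ ^ 2 * γ n ^ 2 / γ (n+1) ^ 2) * ‖w n - y n‖ ^ 2} := by
      rw [hC n]
      ext u
      simp only [Set.mem_setOf_eq]
      rw [norm_sub_sq_real (z n) u, norm_sub_sq_real (w n) u, inner_sub_left]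
      constructor <;> intro h' <;> linarith
    rw [hset]
    exact convex_halfSpace_le
      ⟨fun a b => by rw [inner_add_right]; ring,
       fun c a => by simp only [real_inner_smul_right, smul_eq_mul]; ring⟩ _
  have hQconv : ∀ n, Convex ℝ (Q n) := by
    intro n
    have hset : Q n = {u : H | ⟪x n, x n - x 0⟫ ≤ ⟪u, x n - x 0⟫} := by
      rw [hQ n]
      ext u
      simp only [Set.mem_setOf_eq]
      rw [inner_sub_left]
      constructor <;> intro h' <;> linarith
    rw [hset]
    exact convex_halfSpace_ge
      ⟨fun a b => by rw [inner_add_left],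
       fun c a => by simp only [real_inner_smul_left, smul_eq_mul]⟩ _
  have hCQconv : ∀ n, Convex ℝ (C n ∩ Q n) := fun n => (hCconv n).inter (hQconv n)
  -- M ⊆ Q n
  have hMQ : ∀ n, M ⊆ Q n := by
    intro n
    induction n with
    | zero =>
      intro v _
      rw [hQmem 0 v]
      simp
    | succ n ih =>
      intro v hvM
      have hvCQ : v ∈ C n ∩ Q n := ⟨hMC n hvM, ih hvM⟩
      exact (hQmem (n+1) v).2 (proj_char (hCQconv n) (hproj n).1 (hproj n).2 hvCQ)
  -- monotone distances
  set a : ℕ → ℝ := fun n => ‖x 0 - x n‖ with hadef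
  have hxQ : ∀ n, x (n+1) ∈ Q n := fun n => (hproj n).1.2
  have hstep : ∀ n, a n ^ 2 + ‖x (n+1) - x n‖ ^ 2 ≤ a (n+1) ^ 2 := by
    intro n
    have h1 : ⟪x n - x (n+1), x n - x 0⟫ ≤ 0 := (hQmem n _).1 (hxQ n)
    have he : x 0 - x (n+1) = (x 0 - x n) - (x (n+1) - x n) := by abel
    have h3 : a (n+1) ^ 2 = a n ^ 2 - 2 * ⟪x 0 - x n, x (n+1) - x n⟫ + ‖x (n+1) - x n‖ ^ 2 := by
      show ‖x 0 - x (n+1)‖ ^ 2 = ‖x 0 - x n‖ ^ 2 - 2 * _ + _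
      rw [he, norm_sub_sq_real]
    have h4 : ⟪x 0 - x n, x (n+1) - x n⟫ = ⟪x n - x (n+1), x n - x 0⟫ := by
      rw [show x n - x (n+1) = -(x (n+1) - x n) by abel,
        show x n - x 0 = -(x 0 - x n) by abel, inner_neg_neg, real_inner_comm]
    linarith
  have hamono : Monotone a := by
    refine monotone_nat_of_le_succ fun n => ?_
    nlinarith [hstep n, sq_nonneg (‖x (n+1) - x n‖), norm_nonneg (x 0 - x n),
      norm_nonneg (x 0 - x (n+1))]
  obtain ⟨v0, hv0Ω⟩ := hΩne
  have hv0M : v0 ∈ M := hΩM hv0Ω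
  have haR : ∀ n, a n ≤ ‖x 0 - v0‖ := by
    have h1 : ∀ n, a (n+1) ≤ ‖x 0 - v0‖ := fun n =>
      (hproj n).2 v0 ⟨hMC n hv0M, hMQ n hv0M⟩
    intro n
    cases n with
    | zero => exact (hamono (Nat.zero_le 1)).trans (h1 0)
    | succ n => exact h1 n
  set aL : ℝ := ⨆ n, a n with haLdef
  have hBdd : BddAbove (Set.range a) := ⟨‖x 0 - v0‖, by rintro _ ⟨n, rfl⟩; exact haR n⟩
  have haconv : Tendsto a atTop (nhds aL) := tendsto_atTop_ciSup hamono hBdd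
  have haLe : ∀ n, a n ≤ aL := fun n => le_ciSup hBdd n
  have haL0 : 0 ≤ aL := le_trans (norm_nonneg _) (haLe 0)
  -- x (n+1) - x n → 0
  have hxdiff2 : Tendsto (fun n => ‖x (n+1) - x n‖ ^ 2) atTop (nhds 0) := by
    have h1 : Tendsto (fun n => a (n+1) ^ 2) atTop (nhds (aL ^ 2)) :=
      (haconv.comp (tendsto_add_atTop_nat 1)).pow 2
    have h2 : Tendsto (fun n => a n ^ 2) atTop (nhds (aL ^ 2)) := haconv.pow 2
    have hub : Tendsto (fun n => a (n+1) ^ 2 - a n ^ 2) atTop (nhds 0) := by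
      simpa using h1.sub h2
    refine squeeze_zero (fun n => sq_nonneg _) (fun n => ?_) hub
    nlinarith [hstep n]
  have hxdiff : Tendsto (fun n => ‖x (n+1) - x n‖) atTop (nhds 0) :=
    tendsto_norm_of_sq hxdiff2 fun n => norm_nonneg _
  -- w n - x n → 0
  have hwx : Tendsto (fun n => ‖w n - x n‖) atTop (nhds 0) := by
    have h2 : Tendsto (fun n => ‖w (n+1) - x (n+1)‖) atTop (nhds 0) := by
      refine squeeze_zero (fun n => norm_nonneg _) (fun n => ?_) hxdiff
      show ‖w (n+1) - x (n+1)‖ ≤ ‖x (n+1) - x n‖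
      rw [hw n]
      have he : x (n+1) + α (n+1) • (x (n+1) - x n) - x (n+1) = α (n+1) • (x (n+1) - x n) := by
        abel
      rw [he, norm_smul, Real.norm_eq_abs, abs_of_nonneg (hα (n+1)).1]
      calc α (n+1) * ‖x (n+1) - x n‖ ≤ 1 * ‖x (n+1) - x n‖ :=
            mul_le_mul_of_nonneg_right (hα (n+1)).2.le (norm_nonneg _)
        _ = ‖x (n+1) - x n‖ := one_mul _
    exact (tendsto_add_atTop_iff_nat 1).mp h2
  -- w n - x (n+1) → 0
  have hwx1 : Tendsto (fun n => ‖w n - x (n+1)‖) atTop (nhds 0) := by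
    refine squeeze_zero (fun n => norm_nonneg _) (fun n => ?_) (by simpa using hwx.add hxdiff)
    calc ‖w n - x (n+1)‖ = ‖(w n - x n) - (x (n+1) - x n)‖ := by congr 1; abel
      _ ≤ ‖w n - x n‖ + ‖x (n+1) - x n‖ := norm_sub_le _ _
  -- γ limit
  set γL : ℝ := ⨅ n, γ n with hγLdef
  have hγanti : Antitone γ := antitone_nat_of_succ_le hγdec
  have hγbdd : BddBelow (Set.range γ) := ⟨m0, by rintro _ ⟨n, rfl⟩; exact hγlb n⟩
  have hγconv : Tendsto γ atTop (nhds γL) := tendsto_atTop_ciInf hγanti hγbdd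
  have hγLlb : m0 ≤ γL := le_ciInf hγlb
  have hγLpos : 0 < γL := lt_of_lt_of_le hm0pos hγLlb
  have hκconv : Tendsto (fun n => 1 - μ ^ 2 * γ n ^ 2 / γ (n+1) ^ 2) atTop
      (nhds (1 - μ ^ 2)) := by
    have h1 : Tendsto (fun n => γ (n+1)) atTop (nhds γL) :=
      hγconv.comp (tendsto_add_atTop_nat 1)
    have h2 : Tendsto (fun n => μ ^ 2 * γ n ^ 2 / γ (n+1) ^ 2) atTop
        (nhds (μ ^ 2 * γL ^ 2 / γL ^ 2)) :=
      (tendsto_const_nhds.mul (hγconv.pow 2)).div (h1.pow 2) (pow_ne_zero 2 hγLpos.ne')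
    have h3 : μ ^ 2 * γL ^ 2 / γL ^ 2 = μ ^ 2 := by
      field_simp
    rw [h3] at h2
    simpa using tendsto_const_nhds.sub h2
  -- w n - y n → 0
  have hxC : ∀ n, x (n+1) ∈ C n := fun n => (hproj n).1.1
  have hCineq : ∀ n, (1 - μ ^ 2 * γ n ^ 2 / γ (n+1) ^ 2) * ‖w n - y n‖ ^ 2
      ≤ ‖w n - x (n+1)‖ ^ 2 := by
    intro n
    have h := hxC n
    rw [hC n] at h
    simp only [Set.mem_setOf_eq] at h
    nlinarith [sq_nonneg ‖z n - x (n+1)‖]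
  have hκev : ∀ᶠ n in atTop, (1 - μ ^ 2) / 2 ≤ 1 - μ ^ 2 * γ n ^ 2 / γ (n+1) ^ 2 := by
    have hlt : (1 - μ ^ 2) / 2 < 1 - μ ^ 2 := by nlinarith
    exact hκconv.eventually (eventually_ge_nhds hlt)
  have hwy : Tendsto (fun n => ‖w n - y n‖) atTop (nhds 0) := by
    refine tendsto_norm_of_sq ?_ fun n => norm_nonneg _
    have hub : Tendsto (fun n => ‖w n - x (n+1)‖ ^ 2 / ((1 - μ ^ 2) / 2)) atTop (nhds 0) := by
      simpa using (hwx1.pow 2).div_const ((1 - μ ^ 2) / 2)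
    refine squeeze_zero' (Filter.Eventually.of_forall fun n => sq_nonneg _) ?_ hub
    filter_upwards [hκev] with n hn
    have hpos : (0:ℝ) < (1 - μ ^ 2) / 2 := by nlinarith
    rw [le_div_iff₀ hpos]
    nlinarith [hCineq n, sq_nonneg ‖w n - y n‖]
  -- x n - y n → 0
  have hxy : Tendsto (fun n => ‖x n - y n‖) atTop (nhds 0) := by
    refine squeeze_zero (fun n => norm_nonneg _) (fun n => ?_) (by simpa using hwx.add hwy)
    calc ‖x n - y n‖ = ‖(w n - y n) - (w n - x n)‖ := by congr 1; abel
      _ ≤ ‖w n - y n‖ + ‖w n - x n‖ := norm_sub_le _ _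
      _ = ‖w n - x n‖ + ‖w n - y n‖ := by ring
  -- boundedness of x and the weak cluster point
  have hxbound : ∀ n, ‖x n‖ ≤ ‖x 0‖ + aL := by
    intro n
    calc ‖x n‖ = ‖x 0 - (x 0 - x n)‖ := by congr 1; abel
      _ ≤ ‖x 0‖ + ‖x 0 - x n‖ := norm_sub_le _ _
      _ ≤ ‖x 0‖ + aL := add_le_add le_rfl (haLe n)
  obtain ⟨u, hu⟩ := exists_weak_cluster x (‖x 0‖ + aL) hxbound
  -- g n + F (y n) → 0 in norm
  have hgFy : ∀ n, ‖g n + F (y n)‖ ≤ (1 / m0 + L) * ‖w n - y n‖ := by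
    intro n
    have h1 : g n + F (y n) = (γ n)⁻¹ • ((w n - y n) + γ n • (F (y n) - F (w n))) := by
      rw [← hkeyid n, inv_smul_smul₀ (hγne n)]
    have h3 : ‖F (y n) - F (w n)‖ ≤ L * ‖w n - y n‖ := by
      have := hFlip (y n) (w n)
      rwa [norm_sub_rev (y n) (w n)] at this
    have h2 : ‖(w n - y n) + γ n • (F (y n) - F (w n))‖
        ≤ ‖w n - y n‖ + γ n * (L * ‖w n - y n‖) := by
      refine (norm_add_le _ _).trans ?_
      have h4 : ‖γ n • (F (y n) - F (w n))‖ = γ n * ‖F (y n) - F (w n)‖ := by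
        rw [norm_smul, Real.norm_eq_abs, abs_of_pos (hγpos n)]
      rw [h4]
      exact add_le_add le_rfl (mul_le_mul_of_nonneg_left h3 (hγpos n).le)
    have h5 : (γ n)⁻¹ ≤ 1 / m0 := by
      rw [one_div]
      exact inv_anti₀ hm0pos (hγlb n)
    have h6 : (0:ℝ) ≤ (γ n)⁻¹ := le_of_lt (inv_pos.mpr (hγpos n))
    rw [h1, norm_smul, Real.norm_eq_abs, abs_of_nonneg h6]
    calc (γ n)⁻¹ * ‖(w n - y n) + γ n • (F (y n) - F (w n))‖
        ≤ (γ n)⁻¹ * (‖w n - y n‖ + γ n * (L * ‖w n - y n‖)) :=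
          mul_le_mul_of_nonneg_left h2 h6
      _ = (γ n)⁻¹ * ‖w n - y n‖ + L * ‖w n - y n‖ := by
          rw [mul_add, ← mul_assoc, inv_mul_cancel₀ (hγne n), one_mul]
      _ ≤ (1 / m0) * ‖w n - y n‖ + L * ‖w n - y n‖ :=
          add_le_add (mul_le_mul_of_nonneg_right h5 (norm_nonneg _)) le_rfl
      _ = (1 / m0 + L) * ‖w n - y n‖ := by ring
  -- u is in the Minty set
  have huM : u ∈ M := by
    rw [hMiff]
    intro v q hq
    have hmonosum : ∀ n, ⟪F v + q, y n - v⟫ ≤ ⟪g n + F (y n), y n - v⟫ := by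
      intro n
      have h1 := hGmono (y n) v (g n) q (hgmem n) hq
      have h2 := hFmono (y n) v
      have h3 : (g n + F (y n)) - (F v + q) = (g n - q) + (F (y n) - F v) := by abel
      have h4 : 0 ≤ ⟪(g n + F (y n)) - (F v + q), y n - v⟫ := by
        rw [h3, inner_add_left]; linarith
      rw [inner_sub_left] at h4; linarith
    have hsb : ∀ n, ⟪x n, F v + q⟫ ≤ ⟪v, F v + q⟫ + ‖F v + q‖ * ‖x n - y n‖
        + (1 / m0 + L) * ‖w n - y n‖ * (‖x n - y n‖ + aL + ‖x 0 - v‖) := by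
      intro n
      have hdec : (⟪x n, F v + q⟫ : ℝ)
          = ⟪v, F v + q⟫ + ⟪x n - y n, F v + q⟫ + ⟪y n - v, F v + q⟫ := by
        rw [← inner_add_left, ← inner_add_left]
        congr 1
        abel
      have hb1 : ⟪x n - y n, F v + q⟫ ≤ ‖x n - y n‖ * ‖F v + q‖ := real_inner_le_norm _ _
      have hb2 : ⟪y n - v, F v + q⟫ ≤ (1 / m0 + L) * ‖w n - y n‖ * (‖x n - y n‖ + aL + ‖x 0 - v‖) := by
        have hc1 : (⟪y n - v, F v + q⟫ : ℝ) = ⟪F v + q, y n - v⟫ := real_inner_comm _ _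
        have hc2 : (⟪g n + F (y n), y n - v⟫ : ℝ) ≤ ‖g n + F (y n)‖ * ‖y n - v‖ :=
          real_inner_le_norm _ _
        have hc3 : ‖y n - v‖ ≤ ‖x n - y n‖ + aL + ‖x 0 - v‖ := by
          calc ‖y n - v‖ = ‖-(x n - y n) + (-(x 0 - x n)) + (x 0 - v)‖ := by congr 1; abel
            _ ≤ ‖-(x n - y n) + (-(x 0 - x n))‖ + ‖x 0 - v‖ := norm_add_le _ _
            _ ≤ ‖-(x n - y n)‖ + ‖-(x 0 - x n)‖ + ‖x 0 - v‖ := by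
                exact add_le_add (norm_add_le _ _) le_rfl
            _ = ‖x n - y n‖ + a n + ‖x 0 - v‖ := by rw [norm_neg, norm_neg]
            _ ≤ ‖x n - y n‖ + aL + ‖x 0 - v‖ := by
                have := haLe n; linarith
        have hc4 : ‖g n + F (y n)‖ * ‖y n - v‖
            ≤ ((1 / m0 + L) * ‖w n - y n‖) * (‖x n - y n‖ + aL + ‖x 0 - v‖) :=
          mul_le_mul (hgFy n) hc3 (norm_nonneg _)
            (by positivity)
        rw [hc1]
        calc (⟪F v + q, y n - v⟫ : ℝ) ≤ ⟪g n + F (y n), y n - v⟫ := hmonosum n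
          _ ≤ ‖g n + F (y n)‖ * ‖y n - v‖ := hc2
          _ ≤ (1 / m0 + L) * ‖w n - y n‖ * (‖x n - y n‖ + aL + ‖x 0 - v‖) := hc4
      rw [hdec]
      have : ‖x n - y n‖ * ‖F v + q‖ = ‖F v + q‖ * ‖x n - y n‖ := by ring
      linarith [hb1, hb2]
    have hbconv : Tendsto (fun n => ⟪v, F v + q⟫ + ‖F v + q‖ * ‖x n - y n‖
        + (1 / m0 + L) * ‖w n - y n‖ * (‖x n - y n‖ + aL + ‖x 0 - v‖)) atTop
        (nhds (⟪v, F v + q⟫)) := by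
      have h1 : Tendsto (fun n => ‖F v + q‖ * ‖x n - y n‖) atTop (nhds 0) := by
        simpa using hxy.const_mul ‖F v + q‖
      have h2 : Tendsto (fun n => (1 / m0 + L) * ‖w n - y n‖ * (‖x n - y n‖ + aL + ‖x 0 - v‖))
          atTop (nhds 0) := by
        have h3 : Tendsto (fun n => (1 / m0 + L) * ‖w n - y n‖) atTop (nhds 0) := by
          simpa using hwy.const_mul (1 / m0 + L)
        have h4 : Tendsto (fun n => ‖x n - y n‖ + aL + ‖x 0 - v‖) atTop
            (nhds (0 + aL + ‖x 0 - v‖)) :=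
          (hxy.add tendsto_const_nhds).add tendsto_const_nhds
        simpa using h3.mul h4
      simpa using (tendsto_const_nhds.add h1).add h2
    have hcl := hu (F v + q)
    have hle : (⟪u, F v + q⟫ : ℝ) ≤ ⟪v, F v + q⟫ :=
      clusterPt_le_of_eventually_le hcl hbconv (Filter.Eventually.of_forall hsb)
    have : (⟪F v + q, v - u⟫ : ℝ) = ⟪v, F v + q⟫ - ⟪u, F v + q⟫ := by
      rw [inner_sub_right, real_inner_comm (F v + q) v, real_inner_comm (F v + q) u]
    rw [this]
    linarith
  -- ‖u - x 0‖ ≤ aL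
  have huball : ‖u - x 0‖ ≤ aL := by
    have hcl := hu (u - x 0)
    have hsb : ∀ n, ⟪x n, u - x 0⟫ ≤ ⟪x 0, u - x 0⟫ + aL * ‖u - x 0‖ := by
      intro n
      have h1 : (⟪x n, u - x 0⟫ : ℝ) = ⟪x 0, u - x 0⟫ + ⟪x n - x 0, u - x 0⟫ := by
        rw [← inner_add_left]
        congr 1
        abel
      have h2 : (⟪x n - x 0, u - x 0⟫ : ℝ) ≤ ‖x n - x 0‖ * ‖u - x 0‖ := real_inner_le_norm _ _
      have h3 : ‖x n - x 0‖ = a n := by rw [norm_sub_rev]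
      have h4 : ‖x n - x 0‖ * ‖u - x 0‖ ≤ aL * ‖u - x 0‖ := by
        rw [h3]
        exact mul_le_mul_of_nonneg_right (haLe n) (norm_nonneg _)
      linarith
    have hle : (⟪u, u - x 0⟫ : ℝ) ≤ ⟪x 0, u - x 0⟫ + aL * ‖u - x 0‖ :=
      clusterPt_le_of_eventually_le hcl tendsto_const_nhds (Filter.Eventually.of_forall hsb)
    have h5 : ‖u - x 0‖ ^ 2 ≤ aL * ‖u - x 0‖ := by
      have h6 : (⟪u, u - x 0⟫ : ℝ) - ⟪x 0, u - x 0⟫ = ‖u - x 0‖ ^ 2 := by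
        rw [← inner_sub_left, real_inner_self_eq_norm_sq]
      linarith
    rcases eq_or_lt_of_le (norm_nonneg (u - x 0)) with h6 | h6
    · rw [← h6]; exact haL0
    · nlinarith
  -- strong convergence of x to u
  have hsq : ∀ n, ‖x n - u‖ ^ 2 ≤ aL ^ 2 - a n ^ 2 := by
    intro n
    have hQu : ⟪x n - u, x n - x 0⟫ ≤ 0 := (hQmem n u).1 (hMQ n huM)
    have hexp : ‖x n - u‖ ^ 2 = ‖x n - x 0‖ ^ 2 - 2 * ⟪x n - x 0, u - x 0⟫ + ‖u - x 0‖ ^ 2 := by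
      rw [show x n - u = (x n - x 0) - (u - x 0) by abel, norm_sub_sq_real]
    have h1 : (⟪x n - x 0, u - x 0⟫ : ℝ) = ‖x n - x 0‖ ^ 2 - ⟪x n - x 0, x n - u⟫ := by
      rw [show (u : H) - x 0 = (x n - x 0) - (x n - u) by abel, inner_sub_right,
        real_inner_self_eq_norm_sq]
    have h2 : (⟪x n - x 0, x n - u⟫ : ℝ) = ⟪x n - u, x n - x 0⟫ := real_inner_comm _ _
    have h3 : ‖x n - x 0‖ = a n := by rw [norm_sub_rev]
    rw [h3] at hexp h1
    have h7 : ‖u - x 0‖ ^ 2 ≤ aL ^ 2 := by nlinarith [huball, norm_nonneg (u - x 0)]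
    linarith [hexp, h1, h2, hQu, h7]
  have hxu_norm2 : Tendsto (fun n => ‖x n - u‖ ^ 2) atTop (nhds 0) := by
    have hub : Tendsto (fun n => aL ^ 2 - a n ^ 2) atTop (nhds 0) := by
      have h9 : Tendsto (fun _ : ℕ => aL ^ 2) atTop (nhds (aL ^ 2)) := tendsto_const_nhds
      simpa using h9.sub (haconv.pow 2)
    exact squeeze_zero (fun n => sq_nonneg _) hsq hub
  have hxu_norm : Tendsto (fun n => ‖x n - u‖) atTop (nhds 0) :=
    tendsto_norm_of_sq hxu_norm2 fun n => norm_nonneg _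
  have hxu : Tendsto x atTop (nhds u) := by
    rw [tendsto_iff_norm_sub_tendsto_zero]
    exact hxu_norm
  -- w, y, g convergence
  have hwu_norm : Tendsto (fun n => ‖w n - u‖) atTop (nhds 0) := by
    refine squeeze_zero (fun n => norm_nonneg _) (fun n => ?_) (by simpa using hwx.add hxu_norm)
    calc ‖w n - u‖ = ‖(w n - x n) + (x n - u)‖ := by congr 1; abel
      _ ≤ ‖w n - x n‖ + ‖x n - u‖ := norm_add_le _ _
  have hwu : Tendsto w atTop (nhds u) := by
    rw [tendsto_iff_norm_sub_tendsto_zero]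
    exact hwu_norm
  have hyu : Tendsto y atTop (nhds u) := by
    rw [tendsto_iff_norm_sub_tendsto_zero]
    refine squeeze_zero (fun n => norm_nonneg _) (fun n => ?_) (by simpa using hxy.add hxu_norm)
    calc ‖y n - u‖ = ‖(-(x n - y n)) + (x n - u)‖ := by congr 1; abel
      _ ≤ ‖-(x n - y n)‖ + ‖x n - u‖ := norm_add_le _ _
      _ = ‖x n - y n‖ + ‖x n - u‖ := by rw [norm_neg]
  have hγinvconv : Tendsto (fun n => (γ n)⁻¹) atTop (nhds γL⁻¹) := hγconv.inv₀ hγLpos.ne'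
  have hwyvec : Tendsto (fun n => w n - y n) atTop (nhds 0) := by
    rw [tendsto_zero_iff_norm_tendsto_zero]
    exact hwy
  have hgconv : Tendsto g atTop (nhds (-F u)) := by
    have h1 : ∀ n, g n = (γ n)⁻¹ • (w n - y n) - F (w n) := by
      intro n
      have h2 : γ n • g n = (w n - y n) - γ n • F (w n) := by rw [hgeq n]; abel
      calc g n = (γ n)⁻¹ • (γ n • g n) := (inv_smul_smul₀ (hγne n) _).symm
        _ = (γ n)⁻¹ • ((w n - y n) - γ n • F (w n)) := by rw [h2]
        _ = (γ n)⁻¹ • (w n - y n) - F (w n) := by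
            rw [smul_sub, smul_smul, inv_mul_cancel₀ (hγne n), one_smul]
    have hFw : Tendsto (fun n => F (w n)) atTop (nhds (F u)) := by
      rw [tendsto_iff_norm_sub_tendsto_zero]
      refine squeeze_zero (fun n => norm_nonneg _) (fun n => hFlip (w n) u) ?_
      simpa using hwu_norm.const_mul L
    have h3 : Tendsto (fun n => (γ n)⁻¹ • (w n - y n)) atTop (nhds (γL⁻¹ • (0:H))) :=
      hγinvconv.smul hwyvec
    have h4 : Tendsto (fun n => (γ n)⁻¹ • (w n - y n) - F (w n)) atTop
        (nhds (γL⁻¹ • (0:H) - F u)) := h3.sub hFw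
    simp only [smul_zero, zero_sub] at h4
    have h5 : g = fun n => (γ n)⁻¹ • (w n - y n) - F (w n) := funext h1
    rw [h5]
    exact h4
  -- u ∈ Ω
  have huΩ : u ∈ Ω := by
    rw [hΩ]
    refine hGmax u (-F u) ?_
    intro v' q' hq'
    have h1 : ∀ n, 0 ≤ ⟪g n - q', y n - v'⟫ := fun n => hGmono (y n) v' (g n) q' (hgmem n) hq'
    have h2 : Tendsto (fun n => (⟪g n - q', y n - v'⟫ : ℝ)) atTop
        (nhds ⟪-F u - q', u - v'⟫) :=
      (hgconv.sub tendsto_const_nhds).inner (hyu.sub tendsto_const_nhds)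
    exact ge_of_tendsto' h2 h1
  -- minimality
  have hmin : ∀ v ∈ Ω, ‖x 0 - u‖ ≤ ‖x 0 - v‖ := by
    intro v hv
    have hvM := hΩM hv
    have h1 : ∀ n, a (n+1) ≤ ‖x 0 - v‖ := fun n => (hproj n).2 v ⟨hMC n hvM, hMQ n hvM⟩
    have h2 : aL ≤ ‖x 0 - v‖ :=
      le_of_tendsto (haconv.comp (tendsto_add_atTop_nat 1)) (Filter.Eventually.of_forall h1)
    have h3 : ‖x 0 - u‖ ≤ aL := by rw [norm_sub_rev]; exact huball
    exact h3.trans h2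
  exact ⟨u, ⟨huΩ, hmin⟩, hxu⟩
end

section
/- (Theorem 3.2: strong convergence of the Inertial Shrinking Projection Algorithm.) Let H be a real Hilbert space, let F : H → H be monotone and L-Lipschitz continuous with L > 0, let G : H → Set H be maximal monotone, and assume Ω := {x ∈ H : 0 ∈ Fx + Gx} is nonempty. Fix μ ∈ (0,1), γ₀ > 0, a sequence (α_n) in [0,1), x_{−1} = x₀ ∈ H, and C₀ = H. Suppose sequences (x_n)_{n≥0}, (w_n), (y_n), (z_n) in H, sets (C_n), and positive reals (γ_n) satisfy, for all n ≥ 0: w_n = x_n + α_n(x_n − x_{n−1}); w_n − γ_n F w_n − y_n ∈ γ_n • G y_n; z_n = y_n − γ_n(F y_n − F w_n); γ_{n+1} = min{ μ‖w_n − y_n‖/‖Fw_n − Fy_n‖ , γ_n } if Fw_n ≠ Fy_n and γ_{n+1} = γ_n otherwise; C_{n+1} = {u ∈ C_n : ‖z_n − u‖² ≤ ‖w_n − u‖² − (1 − μ²γ_n²/γ_{n+1}²)‖w_n − y_n‖²}; and x_{n+1} is the metric projection of x₀ onto C_{n+1}. Then (x_n) converges strongly (in norm) to the metric projection q* of x₀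 onto Ω. -/
open RealInnerProductSpace Pointwise Filter Classical Topology

set_option maxHeartbeats 1000000

section
variable {H : Type*} [NormedAddCommGroup H] [InnerProductSpace ℝ H]

lemma aux_identity (wv yv e u : H) (g : ℝ) :
    ‖yv - g • e - u‖ ^ 2 = ‖wv - u‖ ^ 2 - ‖wv - yv‖ ^ 2 + g ^ 2 * ‖e‖ ^ 2
      - 2 * ⟪wv - yv + g • e, yv - u⟫ := by
  have h : ∀ a : H, ‖a‖ ^ 2 = ⟪a, a⟫ := fun a => (real_inner_self_eq_norm_sq a).symm
  simp only [h, inner_sub_left, inner_sub_right, inner_add_left, inner_add_right,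
    real_inner_smul_left, real_inner_smul_right, real_inner_comm]
  ring

lemma aux_identity2 (a b c : H) :
    ‖a - c‖ ^ 2 = ‖a - b‖ ^ 2 - 2 * ⟪a - b, c - b⟫ + ‖c - b‖ ^ 2 := by
  have h : ∀ a : H, ‖a‖ ^ 2 = ⟪a, a⟫ := fun a => (real_inner_self_eq_norm_sq a).symm
  simp only [h, inner_sub_left, inner_sub_right, real_inner_comm]
  ring

lemma aux_halfspace (wv zv : H) (K : ℝ) :
    {u : H | ‖zv - u‖ ^ 2 ≤ ‖wv - u‖ ^ 2 - K} =
    {u : H | ⟪wv - zv, u⟫ ≤ (‖wv‖ ^ 2 - ‖zv‖ ^ 2 - K) / 2} := by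
  ext u
  have h : ∀ a : H, ‖a‖ ^ 2 = ⟪a, a⟫ := fun a => (real_inner_self_eq_norm_sq a).symm
  simp only [Set.mem_setOf_eq, h, inner_sub_left, inner_sub_right, real_inner_comm]
  constructor <;> intro h' <;> linarith

lemma aux_half_closed (a : H) (c : ℝ) : IsClosed {u : H | ⟪a, u⟫ ≤ c} :=
  isClosed_le (continuous_const.inner continuous_id) continuous_const

lemma aux_half_convex (a : H) (c : ℝ) : Convex ℝ {u : H | ⟪a, u⟫ ≤ c} := by
  intro u hu v hv s t hs ht hst
  simp only [Set.mem_setOf_eq, inner_add_right, real_inner_smul_right] at *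
  have h1 := mul_le_mul_of_nonneg_left hu hs
  have h2 := mul_le_mul_of_nonneg_left hv ht
  have h3 : s * c + t * c = c := by rw [← add_mul, hst, one_mul]
  linarith

end

/-- Theorem 3.2: strong convergence of the Inertial Shrinking Projection Algorithm. -/
theorem thm32_ISPA {H : Type*} [NormedAddCommGroup H] [InnerProductSpace ℝ H]
    [CompleteSpace H]
    (F : H → H) (G : H → Set H) (L : ℝ) (hL : 0 < L)
    (hFmono : ∀ x y : H, 0 ≤ ⟪F x - F y, x - y⟫)
    (hFlip : ∀ x y : H, ‖F x - F y‖ ≤ L * ‖x - y‖)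
    (hGmono : ∀ x y p q : H, p ∈ G x → q ∈ G y → 0 ≤ ⟪p - q, x - y⟫)
    (hGmax : ∀ x p : H, (∀ y q : H, q ∈ G y → 0 ≤ ⟪p - q, x - y⟫) → p ∈ G x)
    (Ω : Set H) (hΩ : Ω = {x : H | -F x ∈ G x}) (hΩne : Ω.Nonempty)
    (μ : ℝ) (hμ : μ ∈ Set.Ioo (0 : ℝ) 1)
    (α : ℕ → ℝ) (hα : ∀ n, α n ∈ Set.Ico (0 : ℝ) 1)
    (x w y z : ℕ → H) (γ : ℕ → ℝ) (hγpos : ∀ n, 0 < γ n)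
    (C : ℕ → Set H) (hC0 : C 0 = Set.univ)
    (hw0 : w 0 = x 0)
    (hw : ∀ n, w (n + 1) = x (n + 1) + α (n + 1) • (x (n + 1) - x n))
    (hres : ∀ n, w n - γ n • F (w n) - y n ∈ γ n • G (y n))
    (hz : ∀ n, z n = y n - γ n • (F (y n) - F (w n)))
    (hγrec : ∀ n, γ (n + 1) =
      if F (w n) ≠ F (y n)
      then min (μ * ‖w n - y n‖ / ‖F (w n) - F (y n)‖) (γ n)
      else γ n)
    (hC : ∀ n, C (n + 1) = {u : H | u ∈ C n ∧ ‖z n - u‖ ^ 2 ≤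
      ‖w n - u‖ ^ 2 - (1 - μ ^ 2 * γ n ^ 2 / γ (n + 1) ^ 2) * ‖w n - y n‖ ^ 2})
    (hproj : ∀ n, x (n + 1) ∈ C (n + 1) ∧
      ∀ v ∈ C (n + 1), ‖x 0 - x (n + 1)‖ ≤ ‖x 0 - v‖) :
    ∃ q : H, (q ∈ Ω ∧ ∀ v ∈ Ω, ‖x 0 - q‖ ≤ ‖x 0 - v‖) ∧
      Tendsto x atTop (nhds q) := by
  obtain ⟨u₀, hu₀⟩ := hΩne
  obtain ⟨hμ0, hμ1⟩ := hμ
  -- general projection property including n = 0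
  have hmin : ∀ n, x n ∈ C n ∧ ∀ v ∈ C n, ‖x 0 - x n‖ ≤ ‖x 0 - v‖ := by
    intro n
    cases n with
    | zero => exact ⟨hC0 ▸ Set.mem_univ _, fun v _ => by simp⟩
    | succ n => exact hproj n
  -- γ is nonincreasing and bounded below
  have hγmono : ∀ n, γ (n + 1) ≤ γ n := by
    intro n; rw [hγrec n]; split
    · exact min_le_right _ _
    · exact le_rfl
  set b : ℝ := min (γ 0) (μ / L) with hbdef
  have hb : 0 < b := lt_min (hγpos 0) (div_pos hμ0 hL)
  have hγlb : ∀ n, b ≤ γ n := by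
    intro n; induction n with
    | zero => exact min_le_left _ _
    | succ n ih =>
      rw [hγrec n]; split
      · rename_i hne
        refine le_min (le_trans (min_le_right _ _ : b ≤ μ / L) ?_) ih
        have hwy : w n ≠ y n := fun h => hne (by rw [h])
        have hwy' : 0 < ‖w n - y n‖ := by rw [norm_pos_iff, sub_ne_zero]; exact hwy
        have hF : 0 < ‖F (w n) - F (y n)‖ := by rw [norm_pos_iff, sub_ne_zero]; exact hne
        rw [div_le_div_iff₀ hL hF]
        calc μ * ‖F (w n) - F (y n)‖ ≤ μ * (L * ‖w n - y n‖) :=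
              mul_le_mul_of_nonneg_left (hFlip _ _) hμ0.le
          _ = μ * ‖w n - y n‖ * L := by ring
      · exact ih
  -- step size inequality
  have hstep : ∀ n, γ (n + 1) * ‖F (w n) - F (y n)‖ ≤ μ * ‖w n - y n‖ := by
    intro n; rw [hγrec n]; split
    · rename_i hne
      have hF : 0 < ‖F (w n) - F (y n)‖ := by rw [norm_pos_iff, sub_ne_zero]; exact hne
      calc min (μ * ‖w n - y n‖ / ‖F (w n) - F (y n)‖) (γ n) * ‖F (w n) - F (y n)‖
          ≤ (μ * ‖w n - y n‖ / ‖F (w n) - F (y n)‖) * ‖F (w n) - F (y n)‖ :=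
            mul_le_mul_of_nonneg_right (min_le_left _ _) hF.le
        _ = μ * ‖w n - y n‖ := by field_simp
    · rename_i hne
      push_neg at hne
      rw [hne]
      simp [mul_nonneg hμ0.le (norm_nonneg _)]
  -- resolvent element
  have hpG : ∀ n, (γ n)⁻¹ • (w n - y n) - F (w n) ∈ G (y n) := by
    intro n
    obtain ⟨v, hv, hveq⟩ := hres n
    have h1 : v = (γ n)⁻¹ • (w n - γ n • F (w n) - y n) := by
      rw [← hveq, smul_smul, inv_mul_cancel₀ (hγpos n).ne', one_smul]
    have h2 : (γ n)⁻¹ • (w n - γ n • F (w n) - y n) = (γ n)⁻¹ • (w n - y n) - F (w n) := by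
      have h3 : (γ n)⁻¹ • (γ n • F (w n)) = F (w n) := by
        rw [smul_smul, inv_mul_cancel₀ (hγpos n).ne', one_smul]
      rw [show w n - γ n • F (w n) - y n = (w n - y n) - γ n • F (w n) by abel,
        smul_sub, h3]
    rw [← h2, ← h1]; exact hv
  -- key Tseng-type estimate
  have hkey : ∀ n, ∀ u : H, -F u ∈ G u → ‖z n - u‖ ^ 2 ≤
      ‖w n - u‖ ^ 2 - (1 - μ ^ 2 * γ n ^ 2 / γ (n + 1) ^ 2) * ‖w n - y n‖ ^ 2 := by
    intro n u hu
    have hid := aux_identity (w n) (y n) (F (y n) - F (w n)) u (γ n)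
    rw [← hz n] at hid
    have hinner : 0 ≤ ⟪w n - y n + γ n • (F (y n) - F (w n)), y n - u⟫ := by
      have hG := hGmono (y n) u _ _ (hpG n) hu
      have hF := hFmono (y n) u
      have hdecomp : w n - y n + γ n • (F (y n) - F (w n)) =
          γ n • (((γ n)⁻¹ • (w n - y n) - F (w n)) - (-F u)) + γ n • (F (y n) - F u) := by
        simp only [smul_sub, smul_neg, smul_smul, mul_inv_cancel₀ (hγpos n).ne', one_smul]
        abel
      rw [hdecomp, inner_add_left, real_inner_smul_left, real_inner_smul_left]
      exact add_nonneg (mul_nonneg (hγpos n).le hG) (mul_nonneg (hγpos n).le hF)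
    have hγb : γ n ^ 2 * ‖F (y n) - F (w n)‖ ^ 2 ≤
        μ ^ 2 * γ n ^ 2 / γ (n + 1) ^ 2 * ‖w n - y n‖ ^ 2 := by
      have hs := hstep n
      have h1 : ‖F (y n) - F (w n)‖ = ‖F (w n) - F (y n)‖ := norm_sub_rev _ _
      have h2 : (0:ℝ) < γ (n+1) := hγpos (n+1)
      rw [h1, div_mul_eq_mul_div, le_div_iff₀ (by positivity)]
      have h5 : (γ (n+1) * ‖F (w n) - F (y n)‖)^2 ≤ (μ * ‖w n - y n‖)^2 :=
        pow_le_pow_left₀ (by positivity) hs 2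
      nlinarith [h5, sq_nonneg (γ n)]
    nlinarith [hid, hinner, hγb]
  -- C n nested
  have hCsucc : ∀ n, C (n + 1) ⊆ C n := by
    intro n u hu; rw [hC n] at hu; exact hu.1
  have hCanti : ∀ m n, n ≤ m → C m ⊆ C n := by
    intro m n h
    induction h with
    | refl => exact subset_rfl
    | step _ ih => exact (hCsucc _).trans ih
  -- C n closed and convex
  have hCc : ∀ n, IsClosed (C n) ∧ Convex ℝ (C n) := by
    intro n; induction n with
    | zero => rw [hC0]; exact ⟨isClosed_univ, convex_univ⟩
    | succ n ih =>
      have heq : C (n + 1) = C n ∩ {u : H | ‖z n - u‖ ^ 2 ≤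
          ‖w n - u‖ ^ 2 - (1 - μ ^ 2 * γ n ^ 2 / γ (n + 1) ^ 2) * ‖w n - y n‖ ^ 2} := by
        rw [hC n]; rfl
      rw [heq, aux_halfspace]
      exact ⟨ih.1.inter (aux_half_closed _ _), ih.2.inter (aux_half_convex _ _)⟩
  -- Ω ⊆ C n
  have hΩC : ∀ n, Ω ⊆ C n := by
    intro n; induction n with
    | zero => rw [hC0]; exact Set.subset_univ _
    | succ n ih =>
      intro u hu
      rw [hC n]
      exact ⟨ih hu, hkey n u (by rw [hΩ] at hu; exact hu)⟩
  -- variational inequality for the projection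
  have hVI : ∀ n, ∀ v ∈ C n, ⟪x 0 - x n, v - x n⟫ ≤ 0 := by
    intro n
    have hx := hmin n
    haveI : Nonempty (C n) := ⟨⟨x n, hx.1⟩⟩
    have hiInf : ‖x 0 - x n‖ = ⨅ v : C n, ‖x 0 - v‖ := by
      apply le_antisymm
      · exact le_ciInf fun v => hx.2 v v.2
      · have hbdd : BddBelow (Set.range fun v : C n => ‖x 0 - (v : H)‖) :=
          ⟨0, by rintro _ ⟨v, rfl⟩; exact norm_nonneg _⟩
        exact ciInf_le hbdd ⟨x n, hx.1⟩
    exact (norm_eq_iInf_iff_real_inner_le_zero (hCc n).2 hx.1).1 hiInf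
  -- distance estimate
  have hdist : ∀ n m, n ≤ m → ‖x m - x n‖ ^ 2 ≤ ‖x 0 - x m‖ ^ 2 - ‖x 0 - x n‖ ^ 2 := by
    intro n m hnm
    have hxm : x m ∈ C n := hCanti m n hnm (hmin m).1
    have hvi := hVI n (x m) hxm
    have hi := aux_identity2 (x 0) (x n) (x m)
    linarith
  set D : ℕ → ℝ := fun n => ‖x 0 - x n‖ ^ 2 with hD
  have hDmono : Monotone D := by
    intro n m h
    have h1 := hdist n m h
    have h2 := sq_nonneg ‖x m - x n‖
    simp only [hD]
    linarith
  have hDbdd : BddAbove (Set.range D) := by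
    refine ⟨‖x 0 - u₀‖ ^ 2, ?_⟩
    rintro _ ⟨n, rfl⟩
    have h1 := (hmin n).2 u₀ (hΩC n hu₀)
    exact pow_le_pow_left₀ (norm_nonneg _) h1 2
  have hDconv : Tendsto D atTop (𝓝 (⨆ n, D n)) := tendsto_atTop_ciSup hDmono hDbdd
  have hDC : CauchySeq D := hDconv.cauchySeq
  -- x is Cauchy
  have hxC : CauchySeq x := by
    rw [Metric.cauchySeq_iff] at hDC ⊢
    intro ε hε
    obtain ⟨N, hN⟩ := hDC (ε ^ 2) (by positivity)
    refine ⟨N, ?_⟩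
    have key : ∀ m n, N ≤ m → N ≤ n → n ≤ m → dist (x m) (x n) < ε := by
      intro m n hm hn hnm
      have h1 := hdist n m hnm
      have h2 := hN m hm n hn
      rw [Real.dist_eq] at h2
      rw [dist_eq_norm]
      have h3 : ‖x m - x n‖ ^ 2 < ε ^ 2 := by
        have h4 := le_abs_self (D m - D n)
        simp only [hD] at h4 h2
        linarith
      exact lt_of_pow_lt_pow_left₀ 2 hε.le h3
    intro m hm n hn
    rcases le_total n m with h | h
    · exact key m n hm hn h
    · rw [dist_comm]; exact key n m hn hm h
  obtain ⟨p, hxp⟩ := cauchySeq_tendsto_of_complete hxC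
  -- limits
  have hx1 : Tendsto (fun n => x (n + 1)) atTop (𝓝 p) := (tendsto_add_atTop_iff_nat 1).2 hxp
  have hxdiff : Tendsto (fun n => x (n + 1) - x n) atTop (𝓝 0) := by
    simpa using hx1.sub hxp
  have hα1 : Tendsto (fun n => α (n + 1) • (x (n + 1) - x n)) atTop (𝓝 0) := by
    apply squeeze_zero_norm (a := fun n => ‖x (n + 1) - x n‖)
    · intro n
      rw [norm_smul, Real.norm_eq_abs, abs_of_nonneg (hα (n + 1)).1]
      exact mul_le_of_le_one_left (norm_nonneg _) (hα (n + 1)).2.le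
    · simpa using hxdiff.norm
  have hwlim : Tendsto w atTop (𝓝 p) := by
    rw [← tendsto_add_atTop_iff_nat 1]
    have h1 : Tendsto (fun n => x (n + 1) + α (n + 1) • (x (n + 1) - x n)) atTop (𝓝 (p + 0)) :=
      hx1.add hα1
    rw [add_zero] at h1
    convert h1 using 2 with n
    exact hw n
  -- γ converges
  have hγanti : Antitone γ := antitone_nat_of_succ_le hγmono
  set g : ℝ := ⨅ n, γ n with hg
  have hγconv : Tendsto γ atTop (𝓝 g) :=
    tendsto_atTop_ciInf hγanti ⟨b, by rintro _ ⟨n, rfl⟩; exact hγlb n⟩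
  have hgb : b ≤ g := le_ciInf hγlb
  have hgpos : 0 < g := lt_of_lt_of_le hb hgb
  have hγ1conv : Tendsto (fun n => γ (n + 1)) atTop (𝓝 g) := (tendsto_add_atTop_iff_nat 1).2 hγconv
  have hcoef : Tendsto (fun n => 1 - μ ^ 2 * γ n ^ 2 / γ (n + 1) ^ 2) atTop (𝓝 (1 - μ ^ 2)) := by
    have h1 : Tendsto (fun n => μ ^ 2 * γ n ^ 2 / γ (n + 1) ^ 2) atTop
        (𝓝 (μ ^ 2 * g ^ 2 / g ^ 2)) :=
      (tendsto_const_nhds.mul (hγconv.pow 2)).div (hγ1conv.pow 2) (by positivity)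
    have h2 : μ ^ 2 * g ^ 2 / g ^ 2 = μ ^ 2 := by field_simp
    rw [h2] at h1
    exact tendsto_const_nhds.sub h1
  have hev : ∀ᶠ n in atTop, (1 - μ ^ 2) / 2 ≤ 1 - μ ^ 2 * γ n ^ 2 / γ (n + 1) ^ 2 := by
    apply hcoef.eventually (eventually_ge_nhds ?_)
    nlinarith
  -- ‖w n - y n‖ → 0
  have hwxsq : Tendsto (fun n => ‖w n - x (n + 1)‖ ^ 2) atTop (𝓝 0) := by
    have := ((hwlim.sub hx1).norm).pow 2
    simpa using this
  have hwysq : Tendsto (fun n => ‖w n - y n‖ ^ 2) atTop (𝓝 0) := by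
    have hub : ∀ᶠ n in atTop, ‖w n - y n‖ ^ 2 ≤ (2 / (1 - μ ^ 2)) * ‖w n - x (n + 1)‖ ^ 2 := by
      filter_upwards [hev] with n hn
      have hmem := (hproj n).1
      rw [hC n] at hmem
      have h1 := hmem.2
      have h2 := sq_nonneg ‖z n - x (n + 1)‖
      have h3 : ((1 - μ ^ 2) / 2) * ‖w n - y n‖ ^ 2 ≤
          (1 - μ ^ 2 * γ n ^ 2 / γ (n + 1) ^ 2) * ‖w n - y n‖ ^ 2 :=
        mul_le_mul_of_nonneg_right hn (sq_nonneg _)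
      have h4 : ((1 - μ ^ 2) / 2) * ‖w n - y n‖ ^ 2 ≤ ‖w n - x (n + 1)‖ ^ 2 := by linarith
      rw [← le_div_iff₀' (by nlinarith : (0:ℝ) < (1 - μ ^ 2) / 2)] at h4
      calc ‖w n - y n‖ ^ 2 ≤ ‖w n - x (n + 1)‖ ^ 2 / ((1 - μ ^ 2) / 2) := h4
        _ = (2 / (1 - μ ^ 2)) * ‖w n - x (n + 1)‖ ^ 2 := by
            have hne : (1 : ℝ) - μ ^ 2 ≠ 0 := by nlinarith
            field_simp
    have hlb : ∀ᶠ n in atTop, 0 ≤ ‖w n - y n‖ ^ 2 := Eventually.of_forall fun n => sq_nonneg _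
    have hg0 : Tendsto (fun n => (2 / (1 - μ ^ 2)) * ‖w n - x (n + 1)‖ ^ 2) atTop (𝓝 0) := by
      have := hwxsq.const_mul (2 / (1 - μ ^ 2))
      simpa using this
    exact squeeze_zero' hlb hub hg0
  have hwy : Tendsto (fun n => ‖w n - y n‖) atTop (𝓝 0) := by
    have h1 := (Real.continuous_sqrt.tendsto 0).comp hwysq
    simp only [Function.comp_def, Real.sqrt_zero] at h1
    convert h1 using 2 with n
    exact (Real.sqrt_sq (norm_nonneg _)).symm
  have hv0 : Tendsto (fun n => w n - y n) atTop (𝓝 0) := tendsto_zero_iff_norm_tendsto_zero.mpr hwy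
  have hylim : Tendsto y atTop (𝓝 p) := by
    have h1 := hwlim.sub hv0
    rw [sub_zero] at h1
    have h2 : (fun n => w n - (w n - y n)) = y := by
      funext n; exact sub_sub_cancel _ _
    rwa [h2] at h1
  -- the limit p solves the inclusion
  have hFw : Tendsto (fun n => F (w n)) atTop (𝓝 (F p)) := by
    rw [← tendsto_sub_nhds_zero_iff]
    apply tendsto_zero_iff_norm_tendsto_zero.mpr
    apply squeeze_zero_norm (a := fun n => L * ‖w n - p‖)
    · intro n; simpa using hFlip (w n) p
    · have h1 : Tendsto (fun n => ‖w n - p‖) atTop (𝓝 0) :=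
        tendsto_iff_norm_sub_tendsto_zero.mp hwlim
      simpa using h1.const_mul L
  have hplim : Tendsto (fun n => (γ n)⁻¹ • (w n - y n) - F (w n)) atTop (𝓝 (-F p)) := by
    have h1 : Tendsto (fun n => (γ n)⁻¹) atTop (𝓝 g⁻¹) := hγconv.inv₀ hgpos.ne'
    have h2 := h1.smul hv0
    rw [smul_zero] at h2
    have := h2.sub hFw
    rw [zero_sub] at this
    exact this
  have hpΩ : -F p ∈ G p := by
    apply hGmax
    intro v q hq
    have hn : ∀ n, 0 ≤ ⟪((γ n)⁻¹ • (w n - y n) - F (w n)) - q, y n - v⟫ :=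
      fun n => hGmono _ _ _ _ (hpG n) hq
    have hlim : Tendsto (fun n => ⟪((γ n)⁻¹ • (w n - y n) - F (w n)) - q, y n - v⟫) atTop
        (𝓝 ⟪-F p - q, p - v⟫) :=
      (hplim.sub tendsto_const_nhds).inner (hylim.sub tendsto_const_nhds)
    exact ge_of_tendsto' hlim hn
  refine ⟨p, ⟨?_, ?_⟩, hxp⟩
  · rw [hΩ]; exact hpΩ
  · intro v hv
    have h1 : ∀ n, ‖x 0 - x n‖ ≤ ‖x 0 - v‖ := fun n => (hmin n).2 v (hΩC n hv)
    have h2 : Tendsto (fun n => ‖x 0 - x n‖) atTop (𝓝 ‖x 0 - p‖) :=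
      (tendsto_const_nhds.sub hxp).norm
    exact le_of_tendsto' h2 h1
end

section
/- (Step 1 of the proof of Theorem 3.1.) In the setting of the Inertial Hybrid Projection Algorithm — H a real Hilbert space, F : H → H monotone and L-Lipschitz, G : H → Set H maximal monotone, Ω := {x : 0 ∈ Fx + Gx} nonempty, μ ∈ (0,1), γ₀ > 0, (α_n) ⊂ [0,1), x_{−1} = x₀, and for all n ≥ 0: w_n = x_n + α_n(x_n − x_{n−1}), w_n − γ_n F w_n − y_n ∈ γ_n • G y_n, z_n = y_n − γ_n(F y_n − F w_n), γ_{n+1} = min{μ‖w_n − y_n‖/‖Fw_n − Fy_n‖, γ_n} if Fw_n ≠ Fy_n and γ_{n+1} = γ_n otherwise, C_n = {u ∈ H : ‖z_n − u‖² ≤ ‖w_n − u‖² − (1 − μ²γ_n²/γ_{n+1}²)‖w_n − y_n‖²}, Q_n = {u ∈ H : ⟨x_n − u, x_n − x₀⟩ ≤ 0}, and x_{n+1} the metric projection of x₀ onto C_n ∩ Q_n — one has Ω ⊆ C_n ∩ Q_n for every n ≥ 0. -/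
open RealInnerProductSpace Pointwise Filter Classical

/-- Algebraic identity used in the key estimate. -/
lemma aux_id {H : Type*} [NormedAddCommGroup H] [InnerProductSpace ℝ H] (a b c : H) :
    ‖a - b + c‖ ^ 2 = ‖a‖ ^ 2 - ‖b‖ ^ 2 - 2 * ⟪b - c, a - b⟫ + ‖c‖ ^ 2 := by
  have h1 := norm_add_sq_real (a - b) c
  have h2 := norm_sub_sq_real a b
  have h3 : ⟪b - c, a - b⟫ = ⟪a, b⟫ - ‖b‖ ^ 2 - ⟪a - b, c⟫ := by
    have hab := real_inner_comm a b
    have hac := real_inner_comm a c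
    have hbc := real_inner_comm b c
    simp only [inner_sub_left, inner_sub_right, real_inner_self_eq_norm_sq] at *
    linarith
  linarith

/-- Variational characterization of metric projection onto a convex set. -/
lemma proj_vi {H : Type*} [NormedAddCommGroup H] [InnerProductSpace ℝ H]
    {S : Set H} (hS : Convex ℝ S) {x0 p : H} (hp : p ∈ S)
    (hmin : ∀ v ∈ S, ‖x0 - p‖ ≤ ‖x0 - v‖) :
    ∀ v ∈ S, ⟪x0 - p, v - p⟫ ≤ 0 := by
  have hbdd : BddBelow (Set.range fun w : S => ‖x0 - (w : H)‖) :=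
    ⟨0, by rintro _ ⟨w, rfl⟩; exact norm_nonneg _⟩
  have heq : ‖x0 - p‖ = ⨅ w : S, ‖x0 - (w : H)‖ := by
    haveI : Nonempty S := ⟨⟨p, hp⟩⟩
    exact le_antisymm (le_ciInf fun w => hmin w w.2) (ciInf_le hbdd ⟨p, hp⟩)
  exact (norm_eq_iInf_iff_real_inner_le_zero hS hp).mp heq

/-- Step 1 of the proof of Theorem 3.1: `Ω ⊆ Cₙ ∩ Qₙ` for every `n`. -/
theorem thm31_step1 {H : Type*} [NormedAddCommGroup H] [InnerProductSpace ℝ H]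
    [CompleteSpace H]
    (F : H → H) (G : H → Set H) (L : ℝ) (hL : 0 < L)
    (hFmono : ∀ x y : H, 0 ≤ ⟪F x - F y, x - y⟫)
    (hFlip : ∀ x y : H, ‖F x - F y‖ ≤ L * ‖x - y‖)
    (hGmono : ∀ x y p q : H, p ∈ G x → q ∈ G y → 0 ≤ ⟪p - q, x - y⟫)
    (hGmax : ∀ x p : H, (∀ y q : H, q ∈ G y → 0 ≤ ⟪p - q, x - y⟫) → p ∈ G x)
    (Ω : Set H) (hΩ : Ω = {x : H | -F x ∈ G x}) (hΩne : Ω.Nonempty)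
    (μ : ℝ) (hμ : μ ∈ Set.Ioo (0 : ℝ) 1)
    (α : ℕ → ℝ) (hα : ∀ n, α n ∈ Set.Ico (0 : ℝ) 1)
    (x w y z : ℕ → H) (γ : ℕ → ℝ) (hγpos : ∀ n, 0 < γ n)
    (C Q : ℕ → Set H)
    (hw0 : w 0 = x 0)
    (hw : ∀ n, w (n + 1) = x (n + 1) + α (n + 1) • (x (n + 1) - x n))
    (hres : ∀ n, w n - γ n • F (w n) - y n ∈ γ n • G (y n))
    (hz : ∀ n, z n = y n - γ n • (F (y n) - F (w n)))
    (hγrec : ∀ n, γ (n + 1) =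
      if F (w n) ≠ F (y n)
      then min (μ * ‖w n - y n‖ / ‖F (w n) - F (y n)‖) (γ n)
      else γ n)
    (hC : ∀ n, C n = {u : H | ‖z n - u‖ ^ 2 ≤
      ‖w n - u‖ ^ 2 - (1 - μ ^ 2 * γ n ^ 2 / γ (n + 1) ^ 2) * ‖w n - y n‖ ^ 2})
    (hQ : ∀ n, Q n = {u : H | ⟪x n - u, x n - x 0⟫ ≤ 0})
    (hproj : ∀ n, x (n + 1) ∈ C n ∩ Q n ∧
      ∀ v ∈ C n ∩ Q n, ‖x 0 - x (n + 1)‖ ≤ ‖x 0 - v‖) :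
    ∀ n, Ω ⊆ C n ∩ Q n := by
  -- Ω ⊆ C n for all n
  have hCsub : ∀ n, Ω ⊆ C n := by
    intro n u hu
    have hu' : -F u ∈ G u := by rwa [hΩ] at hu
    obtain ⟨g, hg, hγg⟩ := Set.mem_smul_set.mp (hres n)
    -- key monotonicity inequality
    have h1 : 0 ≤ ⟪g - -F u, y n - u⟫ := hGmono _ _ _ _ hg hu'
    have h2 : 0 ≤ ⟪F (y n) - F u, y n - u⟫ := hFmono _ _
    have h3 : 0 ≤ ⟪g + F (y n), y n - u⟫ := by
      have hsum : ⟪g + F (y n), y n - u⟫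
          = ⟪g - -F u, y n - u⟫ + ⟪F (y n) - F u, y n - u⟫ := by
        rw [← inner_add_left]; congr 1; abel
      linarith [hsum ▸ add_nonneg h1 h2]
    have h4 : (w n - y n) - γ n • (F (w n) - F (y n)) = γ n • (g + F (y n)) := by
      rw [smul_add, hγg, smul_sub]; abel
    have hkey : 0 ≤ ⟪(w n - y n) - γ n • (F (w n) - F (y n)), y n - u⟫ := by
      rw [h4, real_inner_smul_left]
      exact mul_nonneg (hγpos n).le h3
    -- stepsize estimate
    have hstep : γ (n + 1) * ‖F (w n) - F (y n)‖ ≤ μ * ‖w n - y n‖ := by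
      rcases eq_or_ne (F (w n)) (F (y n)) with h | h
      · rw [h, sub_self, norm_zero, mul_zero]
        exact mul_nonneg hμ.1.le (norm_nonneg _)
      · rw [hγrec n, if_pos h]
        have hd : 0 < ‖F (w n) - F (y n)‖ := by
          rw [norm_pos_iff, sub_ne_zero]; exact h
        calc min (μ * ‖w n - y n‖ / ‖F (w n) - F (y n)‖) (γ n) * ‖F (w n) - F (y n)‖
            ≤ (μ * ‖w n - y n‖ / ‖F (w n) - F (y n)‖) * ‖F (w n) - F (y n)‖ :=
              mul_le_mul_of_nonneg_right (min_le_left _ _) hd.le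
          _ = μ * ‖w n - y n‖ := div_mul_cancel₀ _ hd.ne'
    have hγ' := hγpos (n + 1)
    have hc : ‖γ n • (F (w n) - F (y n))‖ ^ 2
        ≤ μ ^ 2 * γ n ^ 2 / γ (n + 1) ^ 2 * ‖w n - y n‖ ^ 2 := by
      rw [norm_smul, Real.norm_eq_abs, abs_of_pos (hγpos n)]
      rw [div_mul_eq_mul_div, le_div_iff₀ (by positivity : (0:ℝ) < γ (n+1) ^ 2)]
      have h2' : (γ (n + 1) * ‖F (w n) - F (y n)‖) ^ 2 ≤ (μ * ‖w n - y n‖) ^ 2 := by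
        apply pow_le_pow_left₀ (by positivity) hstep
      nlinarith [sq_nonneg (γ n)]
    -- put everything together
    have hzid : z n - u = (w n - u) - (w n - y n) + γ n • (F (w n) - F (y n)) := by
      rw [hz n]; module
    have hid := aux_id (w n - u) (w n - y n) (γ n • (F (w n) - F (y n)))
    rw [← hzid] at hid
    have hab : (w n - u) - (w n - y n) = y n - u := by abel
    rw [hab] at hid
    rw [hC n]
    simp only [Set.mem_setOf_eq]
    nlinarith [hkey, hc, hid]
  -- induction for Q
  have hconvC : ∀ n, Convex ℝ (C n) := by
    intro n
    have : C n = {u : H | 2 * ⟪w n - z n, u⟫ ≤ ‖w n‖ ^ 2 - ‖z n‖ ^ 2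
        - (1 - μ ^ 2 * γ n ^ 2 / γ (n + 1) ^ 2) * ‖w n - y n‖ ^ 2} := by
      rw [hC n]
      ext u
      simp only [Set.mem_setOf_eq]
      have e1 := norm_sub_sq_real (z n) u
      have e2 := norm_sub_sq_real (w n) u
      have e3 : ⟪w n - z n, u⟫ = ⟪w n, u⟫ - ⟪z n, u⟫ := inner_sub_left _ _ _
      constructor <;> intro h <;> linarith
    rw [this]
    exact convex_halfSpace_le
      ⟨fun a b => by rw [inner_add_right]; ring,
       fun c a => by rw [real_inner_smul_right]; simp [smul_eq_mul]; ring⟩ _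
  have hconvQ : ∀ n, Convex ℝ (Q n) := by
    intro n
    have : Q n = {u : H | ⟪x n, x n - x 0⟫ ≤ ⟪u, x n - x 0⟫} := by
      rw [hQ n]
      ext u
      simp only [Set.mem_setOf_eq, inner_sub_left]
      constructor <;> intro h <;> linarith
    rw [this]
    exact convex_halfSpace_ge
      ⟨fun a b => by rw [inner_add_left],
       fun c a => by rw [real_inner_smul_left, smul_eq_mul]⟩ _
  intro n
  induction n with
  | zero =>
    intro u hu
    refine ⟨hCsub 0 hu, ?_⟩
    rw [hQ 0]
    simp
  | succ n ih =>
    intro u hu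
    refine ⟨hCsub (n + 1) hu, ?_⟩
    rw [hQ (n + 1)]
    obtain ⟨hmem, hmin⟩ := hproj n
    have hvi := proj_vi ((hconvC n).inter (hconvQ n)) hmem hmin u (ih hu)
    simp only [Set.mem_setOf_eq]
    have : ⟪x (n + 1) - u, x (n + 1) - x 0⟫ = ⟪x 0 - x (n + 1), u - x (n + 1)⟫ := by
      simp only [inner_sub_left, inner_sub_right]
      have h1 := real_inner_comm (x (n + 1)) (x 0)
      have h2 := real_inner_comm u (x 0)
      have h3 := real_inner_comm (x (n + 1)) u
      linarith
    rw [this]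
    exact hvi
end

section
/- (Step 2 of the proof of Theorem 3.1, abstract form.) Let H be a real Hilbert space, x₀ ∈ H, and let (x_n)_{n≥0} be a sequence in H such that ⟨x_n − x_{n+1}, x_n − x₀⟩ ≤ 0 for all n and sup_n ‖x_n − x₀‖ < ∞. Then ‖x_{n+1} − x_n‖² ≤ ‖x_{n+1} − x₀‖² − ‖x_n − x₀‖² for all n, the sequence (‖x_n − x₀‖) is nondecreasing and convergent, and ‖x_{n+1} − x_n‖ → 0. -/
open RealInnerProductSpace Filter

/-- Step 2 of the proof of Theorem 3.1 (abstract form). -/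
theorem thm31_step2_abstract {H : Type*} [NormedAddCommGroup H] [InnerProductSpace ℝ H]
    [CompleteSpace H]
    (x₀ : H) (x : ℕ → H)
    (h1 : ∀ n, ⟪x n - x (n + 1), x n - x₀⟫ ≤ 0)
    (h2 : BddAbove (Set.range fun n => ‖x n - x₀‖)) :
    (∀ n, ‖x (n + 1) - x n‖ ^ 2 ≤ ‖x (n + 1) - x₀‖ ^ 2 - ‖x n - x₀‖ ^ 2) ∧
      Monotone (fun n => ‖x n - x₀‖) ∧
      (∃ l : ℝ, Tendsto (fun n => ‖x n - x₀‖) atTop (nhds l)) ∧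
      Tendsto (fun n => ‖x (n + 1) - x n‖) atTop (nhds 0) := by
  have hkey : ∀ n, ‖x (n + 1) - x₀‖ ^ 2 =
      ‖x n - x₀‖ ^ 2 + 2 * ⟪x n - x₀, x (n + 1) - x n⟫ + ‖x (n + 1) - x n‖ ^ 2 := by
    intro n
    have := @norm_add_sq_real H _ _ (x n - x₀) (x (n + 1) - x n)
    have heq : x n - x₀ + (x (n + 1) - x n) = x (n + 1) - x₀ := by abel
    rw [heq] at this
    linarith
  have hpos : ∀ n, (0:ℝ) ≤ ⟪x n - x₀, x (n + 1) - x n⟫ := by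
    intro n
    have := h1 n
    have h : ⟪x n - x (n + 1), x n - x₀⟫ = -⟪x n - x₀, x (n + 1) - x n⟫ := by
      rw [real_inner_comm]
      rw [show x n - x (n + 1) = -(x (n + 1) - x n) by abel, inner_neg_right]
    rw [h] at this
    linarith
  have hineq : ∀ n, ‖x (n + 1) - x n‖ ^ 2 ≤ ‖x (n + 1) - x₀‖ ^ 2 - ‖x n - x₀‖ ^ 2 := by
    intro n
    have := hkey n
    have := hpos n
    linarith
  have hmono : Monotone (fun n => ‖x n - x₀‖) := by
    apply monotone_nat_of_le_succ
    intro n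
    have h := hineq n
    have h0 : (0:ℝ) ≤ ‖x (n + 1) - x n‖ ^ 2 := sq_nonneg _
    nlinarith [norm_nonneg (x n - x₀), norm_nonneg (x (n + 1) - x₀)]
  have hconv : Tendsto (fun n => ‖x n - x₀‖) atTop
      (nhds (⨆ n, ‖x n - x₀‖)) := tendsto_atTop_ciSup hmono h2
  refine ⟨hineq, hmono, ⟨_, hconv⟩, ?_⟩
  -- squares converge
  have hsq : Tendsto (fun n => ‖x n - x₀‖ ^ 2) atTop
      (nhds ((⨆ n, ‖x n - x₀‖) ^ 2)) := hconv.pow 2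
  have hsq' : Tendsto (fun n => ‖x (n + 1) - x₀‖ ^ 2) atTop
      (nhds ((⨆ n, ‖x n - x₀‖) ^ 2)) := (hsq.comp (tendsto_add_atTop_nat 1))
  have hdiff : Tendsto (fun n => ‖x (n + 1) - x₀‖ ^ 2 - ‖x n - x₀‖ ^ 2) atTop (nhds 0) := by
    simpa using hsq'.sub hsq
  have hsq0 : Tendsto (fun n => ‖x (n + 1) - x n‖ ^ 2) atTop (nhds 0) := by
    refine tendsto_of_tendsto_of_tendsto_of_le_of_le tendsto_const_nhds hdiff
      (fun n => sq_nonneg _) (fun n => hineq n)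
  have h := (Real.continuous_sqrt.continuousAt.tendsto.comp hsq0)
  have heq : ((fun y => Real.sqrt y) ∘ fun n => ‖x (n + 1) - x n‖ ^ 2)
      = fun n => ‖x (n + 1) - x n‖ := by
    funext n
    simp [Function.comp, Real.sqrt_sq (norm_nonneg _)]
  rw [heq] at h
  simpa using h
end

section
/- (Shrinking-projection monotonicity, from the proof of Theorem 3.2.) Let H be a real Hilbert space, x₀ ∈ H, and let (C_n)_{n≥0} be nonempty closed convex subsets of H with C_{n+1} ⊆ C_n for all n, and suppose there exists u ∈ ⋂_n C_n. Let x_n be the metric projection of x₀ onto C_n for each n. Then ‖x_n − x₀‖ ≤ ‖x_{n+1} − x₀‖ ≤ ‖u − x₀‖ for all n, the sequence (‖x_n − x₀‖) converges, and ‖x_{n+1} − x_n‖ → 0. -/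
open Filter
open scoped RealInnerProductSpace

/-- Shrinking-projection monotonicity, from the proof of Theorem 3.2. -/
theorem shrinking_projection_monotonicity {H : Type*} [NormedAddCommGroup H]
    [InnerProductSpace ℝ H] [CompleteSpace H]
    (x₀ : H) (C : ℕ → Set H)
    (hne : ∀ n, (C n).Nonempty) (hclosed : ∀ n, IsClosed (C n))
    (hconvex : ∀ n, Convex ℝ (C n)) (hmono : ∀ n, C (n + 1) ⊆ C n)
    (u : H) (hu : ∀ n, u ∈ C n)
    (x : ℕ → H)
    (hproj : ∀ n, x n ∈ C n ∧ ∀ v ∈ C n, ‖x₀ - x n‖ ≤ ‖x₀ - v‖) :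
    (∀ n, ‖x n - x₀‖ ≤ ‖x (n + 1) - x₀‖ ∧ ‖x (n + 1) - x₀‖ ≤ ‖u - x₀‖) ∧
      (∃ l : ℝ, Tendsto (fun n => ‖x n - x₀‖) atTop (nhds l)) ∧
      Tendsto (fun n => ‖x (n + 1) - x n‖) atTop (nhds 0) := by
  -- basic monotonicity and bound
  have key : ∀ n, ‖x n - x₀‖ ≤ ‖x (n + 1) - x₀‖ ∧ ‖x (n + 1) - x₀‖ ≤ ‖u - x₀‖ := by
    intro n
    constructor
    · have := (hproj n).2 (x (n+1)) (hmono n (hproj (n+1)).1)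
      simpa [norm_sub_rev x₀] using this
    · have := (hproj (n+1)).2 u (hu (n+1))
      simpa [norm_sub_rev x₀] using this
  refine ⟨key, ?_, ?_⟩
  · -- monotone bounded
    have hmonoa : Monotone fun n => ‖x n - x₀‖ := by
      apply monotone_nat_of_le_succ
      intro n; exact (key n).1
    have hbdd : BddAbove (Set.range fun n => ‖x n - x₀‖) := by
      refine ⟨‖u - x₀‖, ?_⟩
      rintro _ ⟨n, rfl⟩
      calc ‖x n - x₀‖ ≤ ‖x (n+1) - x₀‖ := (key n).1
        _ ≤ ‖u - x₀‖ := (key n).2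
    exact ⟨_, tendsto_atTop_ciSup hmonoa hbdd⟩
  · -- variational inequality
    have hvar : ∀ n, ∀ v ∈ C n, inner ℝ (x₀ - x n) (v - x n) ≤ (0:ℝ) := by
      intro n
      haveI : Nonempty (C n) := ⟨⟨x n, (hproj n).1⟩⟩
      have hinf : ‖x₀ - x n‖ = ⨅ w : C n, ‖x₀ - w‖ := by
        refine le_antisymm ?_ ?_
        · exact le_ciInf fun w => (hproj n).2 w w.2
        · exact ciInf_le ⟨0, by rintro _ ⟨w, rfl⟩; positivity⟩ (⟨x n, (hproj n).1⟩ : C n)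
      exact (norm_eq_iInf_iff_real_inner_le_zero (hconvex n) (hproj n).1).1 hinf
    -- squared norm inequality
    have hsq : ∀ n, ‖x (n+1) - x n‖^2 ≤ ‖x (n+1) - x₀‖^2 - ‖x n - x₀‖^2 := by
      intro n
      have h1 : inner ℝ (x₀ - x n) (x (n+1) - x n) ≤ (0:ℝ) :=
        hvar n (x (n+1)) (hmono n (hproj (n+1)).1)
      have expand : ‖x (n+1) - x₀‖^2 =
          ‖x n - x₀‖^2 + ‖x (n+1) - x n‖^2 - 2 * (inner ℝ (x₀ - x n) (x (n+1) - x n) : ℝ) := by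
        have : x (n+1) - x₀ = (x (n+1) - x n) - (x₀ - x n) := by abel
        rw [this, @norm_sub_sq_real]
        have h2 : x n - x₀ = -(x₀ - x n) := by abel
        rw [h2, norm_neg, real_inner_comm]
        ring
      nlinarith [h1]
    -- convergence of squares
    obtain ⟨l, hl⟩ : ∃ l : ℝ, Tendsto (fun n => ‖x n - x₀‖^2) atTop (nhds l) := by
      have hmonoa : Monotone fun n => ‖x n - x₀‖^2 := by
        apply monotone_nat_of_le_succ
        intro n
        have := (key n).1
        nlinarith [norm_nonneg (x n - x₀)]
      have hbdd : BddAbove (Set.range fun n => ‖x n - x₀‖^2) := by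
        refine ⟨‖u - x₀‖^2, ?_⟩
        rintro _ ⟨n, rfl⟩
        have h1 := (key n).1
        have h2 := (key n).2
        simpa using pow_le_pow_left₀ (norm_nonneg _) (h1.trans h2) 2
      exact ⟨_, tendsto_atTop_ciSup hmonoa hbdd⟩
    have hdiff : Tendsto (fun n => ‖x (n+1) - x₀‖^2 - ‖x n - x₀‖^2) atTop (nhds 0) := by
      have h2 : Tendsto (fun n => ‖x (n+1) - x₀‖^2) atTop (nhds l) :=
        hl.comp (tendsto_add_atTop_nat 1)
      simpa using h2.sub hl
    have hsq0 : Tendsto (fun n => ‖x (n+1) - x n‖^2) atTop (nhds 0) := by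
      apply squeeze_zero (fun n => by positivity) hsq hdiff
    have := (Real.continuous_sqrt.tendsto 0).comp hsq0
    have heq : ∀ n, Real.sqrt (‖x (n+1) - x n‖^2) = ‖x (n+1) - x n‖ :=
      fun n => Real.sqrt_sq (norm_nonneg _)
    simpa [Function.comp_def, heq] using this
end

section
/- (Lemma 2.4.) Let C be a nonempty closed convex subset of a real Hilbert space H, let u ∈ H, and let q be the metric projection of u onto C. Let (x_n) be a sequence in H such that every weak sequential cluster point of (x_n) belongs to C (i.e., whenever a subsequence of (x_n) converges weakly to some x, then x ∈ C) and ‖x_n − u‖ ≤ ‖u − q‖ for all n. Then (x_n) converges to q in norm. -/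
open RealInnerProductSpace Filter TopologicalSpace

/-- Weak sequential compactness: a bounded sequence in a real Hilbert space has a
weakly convergent subsequence. -/
lemma exists_weak_subseq {H : Type*} [NormedAddCommGroup H] [InnerProductSpace ℝ H]
    [CompleteSpace H] (y : ℕ → H) (R : ℝ) (hy : ∀ n, ‖y n‖ ≤ R) :
    ∃ (p : H) (ψ : ℕ → ℕ), StrictMono ψ ∧
      ∀ v : H, Tendsto (fun k => ⟪y (ψ k), v⟫) atTop (nhds ⟪p, v⟫) := by
  have hR : (0:ℝ) ≤ R := (norm_nonneg _).trans (hy 0)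
  set D : Submodule ℝ H := (Submodule.span ℝ (Set.range y)).topologicalClosure with hD
  have hyD : ∀ n, y n ∈ D :=
    fun n => Submodule.le_topologicalClosure _ (Submodule.subset_span ⟨n, rfl⟩)
  haveI : CompleteSpace D :=
    (Submodule.isClosed_topologicalClosure _).completeSpace_coe
  -- separability of D
  have hsep : IsSeparable (D : Set H) := by
    have h1 : IsSeparable (Set.range y) := (Set.countable_range y).isSeparable
    have h2 := h1.span (R := ℝ)
    have h3 := h2.closure
    rwa [hD, Submodule.topologicalClosure_coe]
  obtain ⟨c, hc_count, hc_sub⟩ := hsep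
  obtain ⟨e, he⟩ : ∃ e : ℕ → H, insert (0:H) c = Set.range e :=
    (hc_count.insert 0).exists_eq_range (Set.insert_nonempty _ _)
  have hDe : (D : Set H) ⊆ closure (Set.range e) := by
    rw [← he]
    exact hc_sub.trans (closure_mono (Set.subset_insert _ _))
  -- diagonal extraction via compactness of a product of intervals
  set K : Set (ℕ → ℝ) := Set.univ.pi fun i => Set.Icc (-(R*‖e i‖)) (R*‖e i‖) with hK
  have hKcompact : IsCompact K := isCompact_univ_pi fun i => isCompact_Icc
  have hmem : ∀ n, (fun i => ⟪y n, e i⟫) ∈ K := by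
    intro n
    rw [hK, Set.mem_univ_pi]
    intro i
    rw [Set.mem_Icc, ← abs_le]
    calc |⟪y n, e i⟫| ≤ ‖y n‖ * ‖e i‖ := abs_real_inner_le_norm _ _
      _ ≤ R * ‖e i‖ := by
          exact mul_le_mul_of_nonneg_right (hy n) (norm_nonneg _)
  obtain ⟨a, -, ψ, hψ, ha⟩ := hKcompact.isSeqCompact hmem
  have hconv : ∀ i, Tendsto (fun k => ⟪y (ψ k), e i⟫) atTop (nhds (a i)) := by
    intro i
    exact tendsto_pi_nhds.mp ha i
  -- convergence of ⟪y (ψ k), v⟫ for every v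
  have key : ∀ v : H, ∃ l : ℝ, Tendsto (fun k => ⟪y (ψ k), v⟫) atTop (nhds l) := by
    intro v
    set w : H := (D.orthogonalProjectionOnto v : H) with hw
    have hvw : ∀ n, ⟪y n, v⟫ = ⟪y n, w⟫ := by
      intro n
      have hperp : v - w ∈ Dᗮ := Submodule.sub_starProjection_mem_orthogonal (K := D) v
      have h0 : ⟪y n, v - w⟫ = 0 := (Submodule.mem_orthogonal _ _).mp hperp _ (hyD n)
      have := inner_sub_right (𝕜 := ℝ) (y n) v w
      rw [h0] at this
      linarith [this]
    have hwcl : w ∈ closure (Set.range e) := hDe (SetLike.coe_mem _)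
    suffices hcs : CauchySeq (fun k => ⟪y (ψ k), w⟫) by
      obtain ⟨l, hl⟩ := cauchySeq_tendsto_of_complete hcs
      refine ⟨l, ?_⟩
      have : (fun k => ⟪y (ψ k), v⟫) = fun k => ⟪y (ψ k), w⟫ := funext fun k => hvw _
      rw [this]; exact hl
    rw [Metric.cauchySeq_iff]
    intro ε hε
    have hδ : (0:ℝ) < ε/(4*(R+1)) := by positivity
    obtain ⟨b, hbmem, hb⟩ := Metric.mem_closure_iff.mp hwcl _ hδ
    obtain ⟨i, rfl⟩ := hbmem
    have hcauchy := Metric.cauchySeq_iff.mp (hconv i).cauchySeq (ε/2) (by positivity)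
    obtain ⟨N, hN⟩ := hcauchy
    refine ⟨N, fun m hm n hn => ?_⟩
    have hNmn := hN m hm n hn
    rw [Real.dist_eq] at hNmn ⊢
    have hdist : ‖w - e i‖ < ε/(4*(R+1)) := by
      rw [dist_eq_norm] at hb; exact hb
    have hin : ∀ j, |⟪y (ψ j), w - e i⟫| ≤ R * (ε/(4*(R+1))) := by
      intro j
      calc |⟪y (ψ j), w - e i⟫| ≤ ‖y (ψ j)‖ * ‖w - e i‖ := abs_real_inner_le_norm _ _
        _ ≤ R * (ε/(4*(R+1))) :=
            mul_le_mul (hy _) hdist.le (norm_nonneg _) hR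
    have hexp : ∀ j, ⟪y (ψ j), w⟫ = ⟪y (ψ j), e i⟫ + ⟪y (ψ j), w - e i⟫ := by
      intro j
      rw [inner_sub_right]; ring
    rw [hexp m, hexp n]
    have habs : |(⟪y (ψ m), e i⟫ + ⟪y (ψ m), w - e i⟫) -
        (⟪y (ψ n), e i⟫ + ⟪y (ψ n), w - e i⟫)| ≤
        |⟪y (ψ m), e i⟫ - ⟪y (ψ n), e i⟫| + |⟪y (ψ m), w - e i⟫| + |⟪y (ψ n), w - e i⟫| := by
      have := abs_sub (⟪y (ψ m), w - e i⟫) (⟪y (ψ n), w - e i⟫)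
      calc |(⟪y (ψ m), e i⟫ + ⟪y (ψ m), w - e i⟫) - (⟪y (ψ n), e i⟫ + ⟪y (ψ n), w - e i⟫)|
          = |(⟪y (ψ m), e i⟫ - ⟪y (ψ n), e i⟫) + (⟪y (ψ m), w - e i⟫ - ⟪y (ψ n), w - e i⟫)| := by
            ring_nf
        _ ≤ |⟪y (ψ m), e i⟫ - ⟪y (ψ n), e i⟫| + |⟪y (ψ m), w - e i⟫ - ⟪y (ψ n), w - e i⟫| :=
            abs_add_le _ _
        _ ≤ |⟪y (ψ m), e i⟫ - ⟪y (ψ n), e i⟫| + (|⟪y (ψ m), w - e i⟫| + |⟪y (ψ n), w - e i⟫|) := by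
            have := abs_sub_abs_le_abs_sub (⟪y (ψ m), w - e i⟫) (⟪y (ψ n), w - e i⟫)
            have h' := abs_sub (⟪y (ψ m), w - e i⟫) (⟪y (ψ n), w - e i⟫)
            linarith [h']
        _ = _ := by ring
    have hRbound : R * (ε/(4*(R+1))) ≤ ε/4 := by
      rw [← mul_div_assoc, div_le_div_iff₀ (by positivity) (by norm_num : (0:ℝ) < 4)]
      nlinarith [hR, hε.le]
    calc |(⟪y (ψ m), e i⟫ + ⟪y (ψ m), w - e i⟫) - (⟪y (ψ n), e i⟫ + ⟪y (ψ n), w - e i⟫)|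
        ≤ |⟪y (ψ m), e i⟫ - ⟪y (ψ n), e i⟫| + |⟪y (ψ m), w - e i⟫| + |⟪y (ψ n), w - e i⟫| := habs
      _ < ε/2 + (R * (ε/(4*(R+1))) + R * (ε/(4*(R+1)))) := by
          have h1 := hin m; have h2 := hin n
          linarith [hNmn]
      _ ≤ ε/2 + (ε/4 + ε/4) := by linarith [hRbound]
      _ = ε := by ring
  choose l hl using key
  -- l is a bounded linear functional
  have hadd : ∀ v₁ v₂ : H, l (v₁ + v₂) = l v₁ + l v₂ := by
    intro v₁ v₂
    refine tendsto_nhds_unique (hl (v₁ + v₂)) ?_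
    have := (hl v₁).add (hl v₂)
    simpa [inner_add_right] using this
  have hsmul : ∀ (c : ℝ) (v : H), l (c • v) = c * l v := by
    intro c v
    refine tendsto_nhds_unique (hl (c • v)) ?_
    have := (hl v).const_mul c
    simpa [inner_smul_right] using this
  have hbdd : ∀ v : H, ‖l v‖ ≤ R * ‖v‖ := by
    intro v
    have h1 : ∀ k, |⟪y (ψ k), v⟫| ≤ R * ‖v‖ := by
      intro k
      calc |⟪y (ψ k), v⟫| ≤ ‖y (ψ k)‖ * ‖v‖ := abs_real_inner_le_norm _ _
        _ ≤ R * ‖v‖ := mul_le_mul_of_nonneg_right (hy _) (norm_nonneg _)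
    have h2 : Tendsto (fun k => |⟪y (ψ k), v⟫|) atTop (nhds |l v|) := (hl v).abs
    exact le_of_tendsto' h2 h1
  set F : H →L[ℝ] ℝ :=
    LinearMap.mkContinuous
      { toFun := l, map_add' := hadd, map_smul' := hsmul } R hbdd with hF
  set p : H := (InnerProductSpace.toDual ℝ H).symm F with hp
  have hpv : ∀ v : H, ⟪p, v⟫ = l v := by
    intro v
    rw [hp]
    exact InnerProductSpace.toDual_symm_apply
  exact ⟨p, ψ, hψ, fun v => by rw [hpv v]; exact hl v⟩

/-- Lemma 2.4: if every weak sequential cluster point of `(xₙ)` lies in `C` and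
`‖xₙ - u‖ ≤ ‖u - q‖` for all `n`, where `q = P_C u`, then `xₙ → q` in norm. -/
theorem lemma24 {H : Type*} [NormedAddCommGroup H] [InnerProductSpace ℝ H]
    [CompleteSpace H]
    (C : Set H) (hCne : C.Nonempty) (hCclosed : IsClosed C) (hCconvex : Convex ℝ C)
    (u q : H) (hq : q ∈ C ∧ ∀ v ∈ C, ‖u - q‖ ≤ ‖u - v‖)
    (x : ℕ → H)
    (hcluster : ∀ (φ : ℕ → ℕ), StrictMono φ → ∀ p : H,
      (∀ v : H, Tendsto (fun k => ⟪x (φ k), v⟫) atTop (nhds ⟪p, v⟫)) → p ∈ C)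
    (hbound : ∀ n, ‖x n - u‖ ≤ ‖u - q‖) :
    Tendsto x atTop (nhds q) := by
  obtain ⟨hqC, hqmin⟩ := hq
  -- variational inequality for the projection
  have hiInf : ‖u - q‖ = ⨅ w : C, ‖u - (w:H)‖ := by
    haveI : Nonempty C := ⟨⟨q, hqC⟩⟩
    refine le_antisymm (le_ciInf fun w => hqmin w w.2) ?_
    have hbdd : BddBelow (Set.range fun w : C => ‖u - (w:H)‖) := by
      refine ⟨0, fun r hr => ?_⟩
      obtain ⟨w, rfl⟩ := hr
      exact norm_nonneg _
    exact ciInf_le hbdd ⟨q, hqC⟩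
  have hVI : ∀ w ∈ C, ⟪u - q, w - q⟫ ≤ 0 :=
    (norm_eq_iInf_iff_real_inner_le_zero hCconvex hqC).mp hiInf
  apply tendsto_of_subseq_tendsto
  intro ns hns
  obtain ⟨φ, hφ, hφns⟩ := strictMono_subseq_of_tendsto_atTop hns
  set y : ℕ → H := fun k => x ((ns ∘ φ) k) with hy
  have hybound : ∀ k, ‖y k‖ ≤ ‖u‖ + ‖u - q‖ := by
    intro k
    calc ‖y k‖ = ‖(y k - u) + u‖ := by rw [sub_add_cancel]
      _ ≤ ‖y k - u‖ + ‖u‖ := norm_add_le _ _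
      _ ≤ ‖u - q‖ + ‖u‖ := by linarith [hbound ((ns ∘ φ) k)]
      _ = ‖u‖ + ‖u - q‖ := by ring
  obtain ⟨p, ψ, hψ, hweak⟩ := exists_weak_subseq y (‖u‖ + ‖u - q‖) hybound
  have hpC : p ∈ C := by
    refine hcluster ((ns ∘ φ) ∘ ψ) (hφns.comp hψ) p fun v => ?_
    exact hweak v
  -- norm convergence of the subsequence to q
  have h1 : ∀ k, ‖y (ψ k) - q‖^2 ≤ 2 * ⟪y (ψ k) - q, u - q⟫ := by
    intro k
    have hb : ‖y (ψ k) - u‖ ≤ ‖u - q‖ := hbound _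
    have e1 : ‖y (ψ k) - q‖^2 = ‖y (ψ k) - u‖^2 + 2*⟪y (ψ k) - u, u - q⟫ + ‖u - q‖^2 := by
      have := norm_add_sq_real (y (ψ k) - u) (u - q)
      rwa [sub_add_sub_cancel] at this
    have e2 : ⟪y (ψ k) - q, u - q⟫ = ⟪y (ψ k) - u, u - q⟫ + ‖u - q‖^2 := by
      rw [← sub_add_sub_cancel (y (ψ k)) u q, inner_add_left, real_inner_self_eq_norm_sq]
    nlinarith [norm_nonneg (y (ψ k) - u), norm_nonneg (u - q)]
  have h2 : Tendsto (fun k => ⟪y (ψ k) - q, u - q⟫) atTop (nhds ⟪p - q, u - q⟫) := by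
    simp only [inner_sub_left]
    exact (hweak (u - q)).sub tendsto_const_nhds
  have h3 : ⟪p - q, u - q⟫ ≤ 0 := by
    have := hVI p hpC
    rwa [real_inner_comm] at this
  have hc0 : 0 ≤ ⟪p - q, u - q⟫ := by
    refine ge_of_tendsto h2 (Filter.Eventually.of_forall fun k => ?_)
    have := h1 k
    nlinarith [sq_nonneg ‖y (ψ k) - q‖]
  have hceq : ⟪p - q, u - q⟫ = (0:ℝ) := le_antisymm h3 hc0
  have hsq : Tendsto (fun k => ‖y (ψ k) - q‖^2) atTop (nhds 0) := by
    refine squeeze_zero (fun k => sq_nonneg _) h1 ?_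
    have := h2.const_mul 2
    rwa [hceq, mul_zero] at this
  have hnorm : Tendsto (fun k => ‖y (ψ k) - q‖) atTop (nhds 0) := by
    have h4 := (Real.continuous_sqrt.tendsto 0).comp hsq
    have heq : (Real.sqrt ∘ fun k => ‖y (ψ k) - q‖^2) = fun k => ‖y (ψ k) - q‖ := by
      funext k
      simp [Real.sqrt_sq (norm_nonneg _)]
    rwa [heq, Real.sqrt_zero] at h4
  refine ⟨φ ∘ ψ, ?_⟩
  have : Tendsto (fun k => y (ψ k)) atTop (nhds q) := by
    rw [tendsto_iff_norm_sub_tendsto_zero]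
    exact hnorm
  exact this
end
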